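/- arXiv:2008.03742 — 5 statements merged into one kernel-verified Lean document; each statement's English description precedes it below -/
import Mathlib

section
/- Let ν > 0 and n ∈ R^3 with |n| < ν, and set ρ := sqrt(ν² - |n|²). For every δ > 0 there exists a constant C > 0, depending only on δ, such that the surface integral over S² of 1/((ν + n·ω)/2) dω is at most C / (ρ^δ · ν^{1-δ}). -/
open MeasureTheory

open Set
open scoped Pointwise ENNReal
set_option maxHeartbeats 1000000

noncomputable section Aux6

abbrev E3 := EuclideanSpace ℝ (Fin 3)

abbrev sph3 := (volume : Measure E3).toSphere

-- projection shrinks norm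
lemma aux6_proj (u v : E3) (hu : ‖u‖ = 1) :
    ‖v - (inner ℝ v u : ℝ) • u‖ ≤ ‖v‖ := by
  have h : ‖v - (inner ℝ v u : ℝ) • u‖ ^ 2 ≤ ‖v‖ ^ 2 := by
    have := norm_sub_sq_real v ((inner ℝ v u : ℝ) • u)
    rw [this]
    rw [real_inner_smul_right, norm_smul]
    simp [hu, Real.norm_eq_abs]
    nlinarith [sq_nonneg (inner ℝ v u : ℝ), sq_abs (inner ℝ v u : ℝ)]
  have h2 := Real.sqrt_le_sqrt h
  rwa [Real.sqrt_sq (norm_nonneg _), Real.sqrt_sq (norm_nonneg _)] at h2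

end Aux6

lemma aux6_slab (u : E3) (hu : ‖u‖ = 1) (ε : ℝ) (hε : 0 ≤ ε) :
    volume {x : E3 | ‖x‖ ≤ 1 ∧ ‖x - (inner ℝ x u : ℝ) • u‖ ≤ ε} ≤ ENNReal.ofReal (8 * ε ^ 2) := by
  have hcard : Module.finrank ℝ E3 = Fintype.card (Fin 3) := by simp
  have hortho : Orthonormal ℝ (({0} : Set (Fin 3)).restrict fun _ : Fin 3 => u) := by
    constructor
    · intro i; exact hu
    · intro i j hij
      exact absurd (Subsingleton.elim i j) hij
  obtain ⟨b, hb⟩ := hortho.exists_orthonormalBasis_extension_of_card_eq hcard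
  have hb0 : b 0 = u := hb 0 rfl
  set S' : Set (Fin 3 → ℝ) := univ.pi fun i => if i = 0 then Icc (-1 : ℝ) 1 else Icc (-ε) ε with hS'def
  have hS' : MeasurableSet S' := by
    apply MeasurableSet.univ_pi
    intro i
    split <;> exact measurableSet_Icc
  have hmp : MeasurePreserving
      (fun x : E3 => (MeasurableEquiv.toLp 2 (Fin 3 → ℝ)).symm (b.repr x)) volume volume :=
    (EuclideanSpace.volume_preserving_symm_measurableEquiv_toLp (Fin 3)).comp b.measurePreserving_repr
  have hsub : {x : E3 | ‖x‖ ≤ 1 ∧ ‖x - (inner ℝ x u : ℝ) • u‖ ≤ ε} ⊆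
      (fun x : E3 => (MeasurableEquiv.toLp 2 (Fin 3 → ℝ)).symm (b.repr x)) ⁻¹' S' := by
    rintro x ⟨hx1, hx2⟩
    intro i _
    have hrepr : (MeasurableEquiv.toLp 2 (Fin 3 → ℝ)).symm (b.repr x) i = (inner ℝ (b i) x : ℝ) := by
      rw [← b.repr_apply_apply]
      rfl
    by_cases hi : i = 0
    · subst hi
      simp only [if_pos rfl, hrepr, hb0]
      have := abs_real_inner_le_norm u x
      rw [hu, one_mul] at this
      exact abs_le.mp (this.trans hx1)
    · simp only [if_neg hi, hrepr]
      have horth : (inner ℝ (b i) u : ℝ) = 0 := by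
        rw [← hb0]
        exact b.orthonormal.2 hi
      have key : (inner ℝ (b i) x : ℝ) = (inner ℝ (b i) (x - (inner ℝ x u : ℝ) • u) : ℝ) := by
        rw [inner_sub_right, real_inner_smul_right, horth]
        ring
      rw [key]
      have := abs_real_inner_le_norm (b i) (x - (inner ℝ x u : ℝ) • u)
      rw [b.orthonormal.1 i, one_mul] at this
      exact abs_le.mp (this.trans hx2)
  calc volume {x : E3 | ‖x‖ ≤ 1 ∧ ‖x - (inner ℝ x u : ℝ) • u‖ ≤ ε}
      ≤ volume ((fun x : E3 => (MeasurableEquiv.toLp 2 (Fin 3 → ℝ)).symm (b.repr x)) ⁻¹' S') :=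
        measure_mono hsub
    _ = volume S' := hmp.measure_preimage hS'.nullMeasurableSet
    _ = ENNReal.ofReal (8 * ε ^ 2) := by
        rw [hS'def, volume_pi_pi, Fin.prod_univ_three, if_pos rfl, if_neg (by decide),
          if_neg (by decide), Real.volume_Icc, Real.volume_Icc,
          ← ENNReal.ofReal_mul (by norm_num), ← ENNReal.ofReal_mul (by nlinarith)]
        congr 1
        ring

lemma aux6_cap (u : E3) (hu : ‖u‖ = 1) (ε : ℝ) (hε : 0 ≤ ε) :
    (volume : Measure E3).toSphere {ω : Metric.sphere (0 : E3) 1 | ‖(ω : E3) + u‖ ≤ ε} ≤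
      ENNReal.ofReal (24 * ε ^ 2) := by
  set s := {ω : Metric.sphere (0 : E3) 1 | ‖(ω : E3) + u‖ ≤ ε} with hsdef
  have hs : MeasurableSet s := by
    have hcl : IsClosed s :=
      isClosed_le (Continuous.norm (by exact (continuous_subtype_val.add continuous_const)))
        continuous_const
    exact hcl.measurableSet
  rw [Measure.toSphere_apply' _ hs]
  have hsub : Ioo (0:ℝ) 1 • ((↑) '' s : Set E3) ⊆
      {x : E3 | ‖x‖ ≤ 1 ∧ ‖x - (inner ℝ x u : ℝ) • u‖ ≤ ε} := by
    rintro y hy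
    rw [Set.mem_smul] at hy
    obtain ⟨r, hr, x, hx, rfl⟩ := hy
    obtain ⟨ω, hω, rfl⟩ := hx
    have hωn : ‖(ω : E3)‖ = 1 := norm_eq_of_mem_sphere ω
    have hωu : ‖(ω : E3) + u‖ ≤ ε := hω
    have hr0 : 0 < r := hr.1
    have hr1 : r < 1 := hr.2
    constructor
    · rw [norm_smul, hωn, Real.norm_eq_abs, abs_of_pos hr0, mul_one]
      exact hr1.le
    · have hkey : (r • (ω : E3)) - (inner ℝ (r • (ω : E3)) u : ℝ) • u
          = r • (((ω : E3) + u) - (inner ℝ ((ω : E3) + u) u : ℝ) • u) := by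
        rw [real_inner_smul_left, inner_add_left, real_inner_self_eq_norm_mul_norm, hu]
        module
      rw [hkey, norm_smul, Real.norm_eq_abs, abs_of_pos hr0]
      have hproj := aux6_proj u ((ω : E3) + u) hu
      nlinarith [norm_nonneg (((ω : E3) + u) - (inner ℝ ((ω : E3) + u) u : ℝ) • u)]
  calc (Module.finrank ℝ E3) * volume (Ioo (0:ℝ) 1 • ((↑) '' s : Set E3))
      ≤ (Module.finrank ℝ E3) * ENNReal.ofReal (8 * ε ^ 2) :=
        mul_le_mul_right ((measure_mono hsub).trans (aux6_slab u hu ε hε)) _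
    _ = ENNReal.ofReal (24 * ε ^ 2) := by
        have : Module.finrank ℝ E3 = 3 := by simp
        rw [this, show ((3:ℕ):ℝ≥0∞) = ENNReal.ofReal 3 by simp, ← ENNReal.ofReal_mul (by norm_num)]
        congr 1
        ring

lemma aux6_null (v : E3) :
    (volume : Measure E3).toSphere {ω : Metric.sphere (0 : E3) 1 | (ω : E3) = v} = 0 := by
  have hs : MeasurableSet {ω : Metric.sphere (0 : E3) 1 | (ω : E3) = v} :=
    (isClosed_eq continuous_subtype_val continuous_const).measurableSet
  rw [Measure.toSphere_apply' _ hs]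
  have hsub : Ioo (0:ℝ) 1 • ((↑) '' {ω : Metric.sphere (0 : E3) 1 | (ω : E3) = v} : Set E3) ⊆
      (Submodule.span ℝ {v} : Submodule ℝ E3) := by
    rintro y hy
    rw [Set.mem_smul] at hy
    obtain ⟨r, hr, x, hx, rfl⟩ := hy
    obtain ⟨ω, hω, rfl⟩ := hx
    have hωv : (ω : E3) = v := hω
    rw [hωv]
    exact Submodule.smul_mem _ r (Submodule.mem_span_singleton_self v)
  have hspan : (Submodule.span ℝ {v} : Submodule ℝ E3) ≠ ⊤ := by
    intro h
    have h1 : Module.finrank ℝ (Submodule.span ℝ ({v} : Set E3)) ≤ 1 := by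
      refine le_trans (finrank_span_le_card _) ?_
      simp
    rw [h, finrank_top] at h1
    have : Module.finrank ℝ E3 = 3 := by simp
    omega
  rw [measure_mono_null hsub (Measure.addHaar_submodule volume _ hspan), mul_zero]

lemma aux6_lint (δ : ℝ) (hδ0 : 0 < δ) (hδ1 : δ ≤ 1) (u : E3) (hu : ‖u‖ = 1) :
    (∫⁻ ω : Metric.sphere (0:E3) 1, ENNReal.ofReal (‖(ω : E3) + u‖ ^ (δ - 2))
        ∂(volume : Measure E3).toSphere)
      ≤ (volume : Measure E3).toSphere univ +
        ENNReal.ofReal (∫ x in Ioi (1:ℝ), 24 * x ^ (2/(δ-2))) := by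
  have hδ2 : δ - 2 < 0 := by linarith
  have hδ2' : δ - 2 ≠ 0 := by linarith
  have hp : 2/(δ-2) < -1 := by
    rw [div_lt_iff_of_neg hδ2]; linarith
  set f : Metric.sphere (0:E3) 1 → ℝ := fun ω => ‖(ω : E3) + u‖ ^ (δ - 2) with hfdef
  have f_nn : ∀ ω, 0 ≤ f ω := fun ω => Real.rpow_nonneg (norm_nonneg _) _
  have hnm : Measurable fun ω : Metric.sphere (0:E3) 1 => ‖(ω : E3) + u‖ :=
    (continuous_subtype_val.add continuous_const).norm.measurable
  have f_eq : f = fun ω : Metric.sphere (0:E3) 1 => if ‖(ω : E3) + u‖ = 0 then 0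
      else Real.exp ((δ - 2) * Real.log ‖(ω : E3) + u‖) := by
    funext ω
    by_cases h : ‖(ω : E3) + u‖ = 0
    · simp [hfdef, h, Real.zero_rpow hδ2']
    · have hpos : 0 < ‖(ω : E3) + u‖ := lt_of_le_of_ne (norm_nonneg _) (Ne.symm h)
      simp [hfdef, h, Real.rpow_def_of_pos hpos, mul_comm]
  have f_mble : Measurable f := by
    rw [f_eq]
    exact Measurable.ite (hnm (measurableSet_singleton 0))
      measurable_const
      (Real.measurable_exp.comp ((Real.measurable_log.comp hnm).const_mul (δ - 2)))
  rw [lintegral_eq_lintegral_meas_lt _ (Filter.Eventually.of_forall f_nn) f_mble.aemeasurable]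
  have hsplit : Ioc (0:ℝ) 1 ∪ Ioi 1 = Ioi 0 := Ioc_union_Ioi_eq_Ioi zero_le_one
  rw [← hsplit]
  refine (lintegral_union_le _ _ _).trans (add_le_add ?_ ?_)
  · calc (∫⁻ t in Ioc (0:ℝ) 1, (volume : Measure E3).toSphere {a | t < f a})
        ≤ ∫⁻ _ in Ioc (0:ℝ) 1, (volume : Measure E3).toSphere univ :=
          lintegral_mono fun t => measure_mono (subset_univ _)
      _ = (volume : Measure E3).toSphere univ := by
          rw [setLIntegral_const, Real.volume_Ioc]
          norm_num
  · have hbnd : ∀ t ∈ Ioi (1:ℝ), (volume : Measure E3).toSphere {a | t < f a}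
        ≤ ENNReal.ofReal (24 * t ^ (2/(δ-2))) := by
      intro t ht
      have ht1 : (1:ℝ) < t := ht
      have ht0 : (0:ℝ) < t := by linarith
      set ε : ℝ := t ^ (1/(δ-2)) with hεdef
      have hε0 : 0 < ε := Real.rpow_pos_of_pos ht0 _
      have hsub : {a : Metric.sphere (0:E3) 1 | t < f a} ⊆
          {ω : Metric.sphere (0:E3) 1 | ‖(ω : E3) + u‖ ≤ ε} := by
        intro ω hω
        simp only [mem_setOf_eq] at hω ⊢
        by_contra hcon
        push_neg at hcon
        have hεw : ε < ‖(ω : E3) + u‖ := hcon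
        have := Real.rpow_lt_rpow_of_neg hε0 hεw hδ2
        rw [hεdef, ← Real.rpow_mul ht0.le, one_div, inv_mul_cancel₀ hδ2', Real.rpow_one] at this
        exact absurd (hω.trans this) (lt_irrefl _)
      have hsq : ε ^ 2 = t ^ (2/(δ-2)) := by
        rw [hεdef, ← Real.rpow_natCast (t ^ (1/(δ-2))) 2, ← Real.rpow_mul ht0.le]
        congr 1
        push_cast
        ring
      calc (volume : Measure E3).toSphere {a | t < f a}
          ≤ (volume : Measure E3).toSphere {ω : Metric.sphere (0:E3) 1 | ‖(ω : E3) + u‖ ≤ ε} :=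
            measure_mono hsub
        _ ≤ ENNReal.ofReal (24 * ε ^ 2) := aux6_cap u hu ε hε0.le
        _ = ENNReal.ofReal (24 * t ^ (2/(δ-2))) := by rw [hsq]
    have hint : IntegrableOn (fun t : ℝ => 24 * t ^ (2/(δ-2))) (Ioi 1) := by
      exact (integrableOn_Ioi_rpow_of_lt hp one_pos).const_mul 24
    calc (∫⁻ t in Ioi (1:ℝ), (volume : Measure E3).toSphere {a | t < f a})
        ≤ ∫⁻ t in Ioi (1:ℝ), ENNReal.ofReal (24 * t ^ (2/(δ-2))) :=
          setLIntegral_mono' measurableSet_Ioi hbnd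
      _ = ENNReal.ofReal (∫ x in Ioi (1:ℝ), 24 * x ^ (2/(δ-2))) := by
          rw [← ofReal_integral_eq_lintegral_ofReal hint]
          filter_upwards [self_mem_ae_restrict measurableSet_Ioi] with x hx
          have : (0:ℝ) < x := lt_trans one_pos hx
          positivity

lemma aux6_main (δ : ℝ) (hδ0 : 0 < δ) (hδ1 : δ ≤ 1) :
    ∃ C > 0, ∀ (ν : ℝ), 0 < ν → ∀ n : E3, ‖n‖ < ν →
      (∫ ω : Metric.sphere (0 : E3) 1,
          1 / ((ν + (inner ℝ n (ω : E3) : ℝ)) / 2) ∂(volume : Measure E3).toSphere)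
        ≤ C / (Real.sqrt (ν ^ 2 - ‖n‖ ^ 2) ^ δ * ν ^ (1 - δ)) := by
  set M : ℝ := ((volume : Measure E3).toSphere univ).toReal with hMdef
  set V : ℝ := ∫ x in Ioi (1:ℝ), 24 * x ^ (2/(δ-2)) with hVdef
  have hM0 : 0 ≤ M := ENNReal.toReal_nonneg
  have hV0 : 0 ≤ V := by
    apply setIntegral_nonneg measurableSet_Ioi
    intro x hx
    have hx0 : (0:ℝ) < x := lt_trans one_pos hx
    positivity
  set L : ℝ := M + V with hLdef
  have hL0 : 0 ≤ L := by positivity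
  refine ⟨4*M + 16*L + 1, by positivity, ?_⟩
  intro ν hν n hn
  set a : ℝ := ‖n‖ with hadef
  have ha0 : 0 ≤ a := norm_nonneg n
  have hρ2 : 0 < ν^2 - a^2 := by nlinarith
  set ρ : ℝ := Real.sqrt (ν^2 - a^2) with hρdef
  have hρ0 : 0 < ρ := Real.sqrt_pos.mpr hρ2
  set P : ℝ := ρ ^ δ * ν ^ (1-δ) with hPdef
  have hP : 0 < P := by
    apply mul_pos (Real.rpow_pos_of_pos hρ0 δ) (Real.rpow_pos_of_pos hν _)
  rw [le_div_iff₀ hP]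
  -- basic facts about the integrand
  set f : Metric.sphere (0:E3) 1 → ℝ := fun ω => 1 / ((ν + (inner ℝ n (ω : E3) : ℝ)) / 2)
    with hfdef
  have hinner : ∀ ω : Metric.sphere (0:E3) 1, |(inner ℝ n (ω : E3) : ℝ)| ≤ a := by
    intro ω
    have := abs_real_inner_le_norm n (ω : E3)
    rwa [norm_eq_of_mem_sphere ω, mul_one] at this
  have hden : ∀ ω : Metric.sphere (0:E3) 1, 0 < (ν + (inner ℝ n (ω : E3) : ℝ)) / 2 := by
    intro ω
    have := abs_le.mp (hinner ω)
    linarith [this.1]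
  have hf_nn : ∀ ω, 0 ≤ f ω := fun ω => le_of_lt (by
    have := hden ω
    simp only [hfdef]
    positivity)
  have hf_meas : AEStronglyMeasurable f ((volume : Measure E3).toSphere) := by
    apply Continuous.aestronglyMeasurable
    apply Continuous.div continuous_const
    · exact (continuous_const.add (Continuous.inner continuous_const
        continuous_subtype_val)).div_const 2
    · exact fun ω => (hden ω).ne'
  have hI_eq : (∫ ω : Metric.sphere (0 : E3) 1, f ω ∂(volume : Measure E3).toSphere)
      = (∫⁻ ω : Metric.sphere (0 : E3) 1, ENNReal.ofReal (f ω)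
          ∂(volume : Measure E3).toSphere).toReal :=
    integral_eq_lintegral_of_nonneg_ae (Filter.Eventually.of_forall hf_nn) hf_meas
  rcases le_or_gt a (ν/2) with hcase | hcase
  · -- small a
    have hbound : ∀ ω, f ω ≤ 4/ν := by
      intro ω
      have h1 := (abs_le.mp (hinner ω)).1
      have hd : ν/4 ≤ (ν + (inner ℝ n (ω : E3) : ℝ)) / 2 := by linarith
      have h2 : 1 / ((ν + (inner ℝ n (ω : E3) : ℝ)) / 2) ≤ 1/(ν/4) :=
        one_div_le_one_div_of_le (by positivity) hd
      calc f ω ≤ 1/(ν/4) := h2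
        _ = 4/ν := by rw [one_div, inv_div]
    have hIle : (∫ ω : Metric.sphere (0 : E3) 1, f ω ∂(volume : Measure E3).toSphere)
        ≤ 4/ν * M := by
      rw [hI_eq]
      have h1 : (∫⁻ ω : Metric.sphere (0 : E3) 1, ENNReal.ofReal (f ω)
            ∂(volume : Measure E3).toSphere)
          ≤ ENNReal.ofReal (4/ν) * (volume : Measure E3).toSphere univ := by
        calc (∫⁻ ω : Metric.sphere (0 : E3) 1, ENNReal.ofReal (f ω)
              ∂(volume : Measure E3).toSphere)
            ≤ ∫⁻ _ : Metric.sphere (0 : E3) 1, ENNReal.ofReal (4/ν)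
              ∂(volume : Measure E3).toSphere :=
              lintegral_mono fun ω => ENNReal.ofReal_le_ofReal (hbound ω)
          _ = ENNReal.ofReal (4/ν) * (volume : Measure E3).toSphere univ := lintegral_const _
      have hfin : ENNReal.ofReal (4/ν) * (volume : Measure E3).toSphere univ ≠ ⊤ :=
        ENNReal.mul_ne_top ENNReal.ofReal_ne_top (measure_ne_top _ _)
      calc (∫⁻ ω : Metric.sphere (0 : E3) 1, ENNReal.ofReal (f ω)
            ∂(volume : Measure E3).toSphere).toReal
          ≤ (ENNReal.ofReal (4/ν) * (volume : Measure E3).toSphere univ).toReal :=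
            ENNReal.toReal_mono hfin h1
        _ = 4/ν * M := by
            rw [ENNReal.toReal_mul, ENNReal.toReal_ofReal (by positivity)]
    have hρν : ρ ≤ ν := by
      rw [hρdef]
      calc Real.sqrt (ν^2 - a^2) ≤ Real.sqrt (ν^2) := Real.sqrt_le_sqrt (by nlinarith)
        _ = ν := Real.sqrt_sq hν.le
    have hPν : P ≤ ν := by
      rw [hPdef]
      calc ρ ^ δ * ν ^ (1-δ) ≤ ν ^ δ * ν ^ (1-δ) :=
            mul_le_mul_of_nonneg_right (Real.rpow_le_rpow hρ0.le hρν hδ0.le)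
              (Real.rpow_nonneg hν.le _)
        _ = ν := by rw [← Real.rpow_add hν]; norm_num
    have hInn : 0 ≤ (∫ ω : Metric.sphere (0 : E3) 1, f ω ∂(volume : Measure E3).toSphere) := by
      rw [hI_eq]; exact ENNReal.toReal_nonneg
    calc (∫ ω : Metric.sphere (0 : E3) 1, f ω ∂(volume : Measure E3).toSphere) * P
        ≤ (4/ν * M) * ν := mul_le_mul hIle hPν hP.le (by positivity)
      _ = 4 * M := by field_simp
      _ ≤ 4*M + 16*L + 1 := by linarith
  · -- large a
    have ha : 0 < a := by linarith
    have hνa : 0 < ν - a := by linarith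
    set u : E3 := a⁻¹ • n with hudef
    have hu : ‖u‖ = 1 := by
      rw [hudef, norm_smul, Real.norm_eq_abs, abs_inv, abs_of_pos ha, ← hadef,
        inv_mul_cancel₀ ha.ne']
    have hnau : n = a • u := by
      rw [hudef, smul_smul, mul_inv_cancel₀ ha.ne', one_smul]
    have hc₀ : 0 < 2 * (ν - a) ^ (-(δ/2)) * (a/2) ^ (δ/2 - 1) :=
      mul_pos (mul_pos two_pos (Real.rpow_pos_of_pos hνa _))
        (Real.rpow_pos_of_pos (by linarith) _)
    have hpt : ∀ ω : Metric.sphere (0:E3) 1, (ω : E3) ≠ -u →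
        f ω ≤ (2 * (ν - a) ^ (-(δ/2)) * (a/2) ^ (δ/2 - 1)) * ‖(ω : E3) + u‖ ^ (δ - 2) := by
      intro ω hne
      have hωn : ‖(ω : E3)‖ = 1 := norm_eq_of_mem_sphere ω
      have hw0 : 0 < ‖(ω : E3) + u‖ := by
        rw [norm_pos_iff]
        intro h
        exact hne (eq_neg_of_add_eq_zero_left h)
      have hexp : ‖(ω : E3) + u‖^2 = 2 + 2*(inner ℝ u (ω : E3) : ℝ) := by
        rw [norm_add_sq_real, hωn, hu, real_inner_comm]; ring
      have hinn2 : (inner ℝ n (ω : E3) : ℝ) = a * (inner ℝ u (ω : E3) : ℝ) := by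
        nth_rewrite 1 [hnau]
        rw [real_inner_smul_left]
      have hden2 : ν + (inner ℝ n (ω : E3) : ℝ) = (ν - a) + (a/2) * ‖(ω : E3) + u‖^2 := by
        rw [hinn2, hexp]; ring
      have hp₂ : 0 < (a/2) * ‖(ω : E3) + u‖^2 := by positivity
      have hgeo := Real.geom_mean_le_arith_mean2_weighted
        (by linarith : (0:ℝ) ≤ δ/2) (by linarith : (0:ℝ) ≤ 1 - δ/2) hνa.le hp₂.le
        (by ring : δ/2 + (1 - δ/2) = 1)
      have hsum : δ/2 * (ν-a) + (1 - δ/2) * ((a/2) * ‖(ω : E3) + u‖^2)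
          ≤ (ν-a) + (a/2) * ‖(ω : E3) + u‖^2 := by nlinarith
      have hgpos : 0 < (ν-a) ^ (δ/2) * ((a/2) * ‖(ω : E3) + u‖^2) ^ (1 - δ/2) :=
        mul_pos (Real.rpow_pos_of_pos hνa _) (Real.rpow_pos_of_pos hp₂ _)
      have hf_le : f ω ≤ 2 / ((ν-a) ^ (δ/2) * ((a/2) * ‖(ω : E3) + u‖^2) ^ (1 - δ/2)) := by
        have h1 : f ω = 2 / ((ν-a) + (a/2) * ‖(ω : E3) + u‖^2) := by
          show 1 / ((ν + (inner ℝ n (ω : E3) : ℝ)) / 2) = _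
          rw [hden2, one_div, inv_div]
        rw [h1]
        exact div_le_div_of_nonneg_left (by norm_num) hgpos (hgeo.trans hsum)
      refine hf_le.trans (le_of_eq ?_)
      have h2 : ((a/2) * ‖(ω : E3) + u‖^2) ^ (1 - δ/2)
          = (a/2) ^ (1 - δ/2) * ‖(ω : E3) + u‖ ^ (2 - δ) := by
        rw [Real.mul_rpow (by linarith) (by positivity)]
        congr 1
        rw [← Real.rpow_natCast ‖(ω : E3) + u‖ 2, ← Real.rpow_mul (norm_nonneg _)]
        congr 1
        push_cast
        ring
      rw [h2, Real.rpow_neg hνa.le,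
        show (δ/2 - 1 : ℝ) = -(1 - δ/2) by ring, Real.rpow_neg (by linarith : (0:ℝ) ≤ a/2),
        show (δ - 2 : ℝ) = -(2 - δ) by ring, Real.rpow_neg (norm_nonneg _)]
      rw [div_eq_mul_inv, mul_inv, mul_inv]
      ring
    have hae_ne : ∀ᵐ ω : Metric.sphere (0:E3) 1 ∂(volume : Measure E3).toSphere,
        (ω : E3) ≠ -u := by
      rw [ae_iff]
      have hset : {ω : Metric.sphere (0:E3) 1 | ¬ (ω : E3) ≠ -u}
          = {ω : Metric.sphere (0:E3) 1 | (ω : E3) = -u} := by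
        ext ω; simp
      rw [hset]
      exact aux6_null (-u)
    have hIle : (∫ ω : Metric.sphere (0 : E3) 1, f ω ∂(volume : Measure E3).toSphere)
        ≤ (2 * (ν - a) ^ (-(δ/2)) * (a/2) ^ (δ/2 - 1)) * L := by
      rw [hI_eq]
      have hlin : (∫⁻ ω : Metric.sphere (0 : E3) 1, ENNReal.ofReal (f ω)
            ∂(volume : Measure E3).toSphere)
          ≤ ENNReal.ofReal (2 * (ν - a) ^ (-(δ/2)) * (a/2) ^ (δ/2 - 1)) *
              ((volume : Measure E3).toSphere univ +
                ENNReal.ofReal V) := by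
        calc (∫⁻ ω : Metric.sphere (0 : E3) 1, ENNReal.ofReal (f ω)
              ∂(volume : Measure E3).toSphere)
            ≤ ∫⁻ ω : Metric.sphere (0 : E3) 1,
                ENNReal.ofReal ((2 * (ν - a) ^ (-(δ/2)) * (a/2) ^ (δ/2 - 1)) *
                  ‖(ω : E3) + u‖ ^ (δ - 2)) ∂(volume : Measure E3).toSphere := by
              apply lintegral_mono_ae
              filter_upwards [hae_ne] with ω hω
              exact ENNReal.ofReal_le_ofReal (hpt ω hω)
          _ = ENNReal.ofReal (2 * (ν - a) ^ (-(δ/2)) * (a/2) ^ (δ/2 - 1)) *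
                ∫⁻ ω : Metric.sphere (0 : E3) 1, ENNReal.ofReal (‖(ω : E3) + u‖ ^ (δ - 2))
                  ∂(volume : Measure E3).toSphere := by
              simp_rw [ENNReal.ofReal_mul hc₀.le]
              exact lintegral_const_mul' _ _ ENNReal.ofReal_ne_top
          _ ≤ _ := mul_le_mul_right (aux6_lint δ hδ0 hδ1 u hu) _
      have hfin : ENNReal.ofReal (2 * (ν - a) ^ (-(δ/2)) * (a/2) ^ (δ/2 - 1)) *
            ((volume : Measure E3).toSphere univ +
              ENNReal.ofReal V) ≠ ⊤ :=
        ENNReal.mul_ne_top ENNReal.ofReal_ne_top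
          (ENNReal.add_ne_top.mpr ⟨measure_ne_top _ _, ENNReal.ofReal_ne_top⟩)
      calc (∫⁻ ω : Metric.sphere (0 : E3) 1, ENNReal.ofReal (f ω)
            ∂(volume : Measure E3).toSphere).toReal
          ≤ (ENNReal.ofReal (2 * (ν - a) ^ (-(δ/2)) * (a/2) ^ (δ/2 - 1)) *
              ((volume : Measure E3).toSphere univ +
                ENNReal.ofReal (∫ x in Ioi (1:ℝ), 24 * x ^ (2/(δ-2))))).toReal :=
            ENNReal.toReal_mono hfin hlin
        _ = (2 * (ν - a) ^ (-(δ/2)) * (a/2) ^ (δ/2 - 1)) * L := by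
            rw [ENNReal.toReal_mul, ENNReal.toReal_add (measure_ne_top _ _)
              ENNReal.ofReal_ne_top, ENNReal.toReal_ofReal hc₀.le,
              ENNReal.toReal_ofReal hV0]
    have hρδ : ρ ^ δ = (ν-a)^(δ/2) * (ν+a)^(δ/2) := by
      rw [hρdef, show ν^2 - a^2 = (ν-a)*(ν+a) by ring, Real.sqrt_eq_rpow,
        ← Real.rpow_mul (by nlinarith : (0:ℝ) ≤ (ν-a)*(ν+a)),
        show (1/2*δ : ℝ) = δ/2 by ring,
        Real.mul_rpow hνa.le (by linarith : (0:ℝ) ≤ ν+a)]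
    have hkey : (2 * (ν - a) ^ (-(δ/2)) * (a/2) ^ (δ/2 - 1)) * P
        = 2 * (a/2)^(δ/2-1) * (ν+a)^(δ/2) * ν^(1-δ) := by
      rw [hPdef, hρδ]
      have hcancel : (ν-a)^(-(δ/2)) * (ν-a)^(δ/2) = 1 := by
        rw [← Real.rpow_add hνa]; norm_num
      calc (2 * (ν - a) ^ (-(δ/2)) * (a/2) ^ (δ/2 - 1)) * ((ν-a)^(δ/2) * (ν+a)^(δ/2) * ν^(1-δ))
          = ((ν-a)^(-(δ/2)) * (ν-a)^(δ/2)) * (2 * (a/2)^(δ/2-1) * (ν+a)^(δ/2) * ν^(1-δ)) := by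
            ring
        _ = 2 * (a/2)^(δ/2-1) * (ν+a)^(δ/2) * ν^(1-δ) := by rw [hcancel, one_mul]
    have b1 : (a/2)^(δ/2-1) ≤ (ν/4)^(δ/2-1) :=
      Real.rpow_le_rpow_of_nonpos (by linarith) (by linarith) (by linarith)
    have b2 : (ν+a)^(δ/2) ≤ (2*ν)^(δ/2) :=
      Real.rpow_le_rpow (by linarith) (by linarith) (by linarith)
    have n1 : (0:ℝ) ≤ (ν+a)^(δ/2) := Real.rpow_nonneg (by linarith) _
    have n2 : (0:ℝ) ≤ ν^(1-δ) := Real.rpow_nonneg hν.le _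
    have n3 : (0:ℝ) ≤ (ν/4)^(δ/2-1) := Real.rpow_nonneg (by positivity) _
    have hmid : 2 * (a/2)^(δ/2-1) * (ν+a)^(δ/2) * ν^(1-δ)
        ≤ 2 * (ν/4)^(δ/2-1) * (2*ν)^(δ/2) * ν^(1-δ) := by
      have s1 : 2 * (a/2)^(δ/2-1) * (ν+a)^(δ/2) * ν^(1-δ)
          ≤ 2 * (ν/4)^(δ/2-1) * (ν+a)^(δ/2) * ν^(1-δ) := by
        apply mul_le_mul_of_nonneg_right _ n2
        apply mul_le_mul_of_nonneg_right _ n1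
        linarith [b1]
      have s2 : 2 * (ν/4)^(δ/2-1) * (ν+a)^(δ/2) * ν^(1-δ)
          ≤ 2 * (ν/4)^(δ/2-1) * (2*ν)^(δ/2) * ν^(1-δ) := by
        apply mul_le_mul_of_nonneg_right _ n2
        exact mul_le_mul_of_nonneg_left b2 (by positivity)
      exact s1.trans s2
    have hval : 2 * (ν/4)^(δ/2-1) * (2*ν)^(δ/2) * ν^(1-δ) ≤ 16 := by
      have e1 : (ν/4)^(δ/2-1) = ν^(δ/2-1) * (4:ℝ)^(1-δ/2) := by
        rw [Real.div_rpow hν.le (by norm_num : (0:ℝ) ≤ 4), div_eq_mul_inv,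
          ← Real.rpow_neg (by norm_num : (0:ℝ) ≤ 4), show (-(δ/2-1) : ℝ) = 1-δ/2 by ring]
      have e2 : ((2:ℝ)*ν)^(δ/2) = 2^(δ/2) * ν^(δ/2) := Real.mul_rpow (by norm_num) hν.le
      have e3 : ν^(δ/2-1) * ν^(δ/2) * ν^(1-δ) = 1 := by
        rw [← Real.rpow_add hν, ← Real.rpow_add hν, show (δ/2-1+δ/2+(1-δ) : ℝ) = 0 by ring,
          Real.rpow_zero]
      have h4 : (4:ℝ)^(1-δ/2) ≤ 4 := by
        calc (4:ℝ)^(1-δ/2) ≤ (4:ℝ)^(1:ℝ) :=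
              Real.rpow_le_rpow_of_exponent_le (by norm_num) (by linarith)
          _ = 4 := Real.rpow_one 4
      have h2 : (2:ℝ)^(δ/2) ≤ 2 := by
        calc (2:ℝ)^(δ/2) ≤ (2:ℝ)^(1:ℝ) :=
              Real.rpow_le_rpow_of_exponent_le (by norm_num) (by linarith)
          _ = 2 := Real.rpow_one 2
      have h4p : (0:ℝ) < (4:ℝ)^(1-δ/2) := Real.rpow_pos_of_pos (by norm_num) _
      have h2p : (0:ℝ) < (2:ℝ)^(δ/2) := Real.rpow_pos_of_pos (by norm_num) _
      calc 2 * (ν/4)^(δ/2-1) * (2*ν)^(δ/2) * ν^(1-δ)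
          = (2 * 4^(1-δ/2) * 2^(δ/2)) * (ν^(δ/2-1) * ν^(δ/2) * ν^(1-δ)) := by
            rw [e1, e2]; ring
        _ = 2 * 4^(1-δ/2) * 2^(δ/2) := by rw [e3, mul_one]
        _ ≤ 16 := by nlinarith
    have hcP : (2 * (ν - a) ^ (-(δ/2)) * (a/2) ^ (δ/2 - 1)) * P ≤ 16 := by
      rw [hkey]; exact hmid.trans hval
    calc (∫ ω : Metric.sphere (0 : E3) 1, f ω ∂(volume : Measure E3).toSphere) * P
        ≤ ((2 * (ν - a) ^ (-(δ/2)) * (a/2) ^ (δ/2 - 1)) * L) * P :=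
          mul_le_mul_of_nonneg_right hIle hP.le
      _ = ((2 * (ν - a) ^ (-(δ/2)) * (a/2) ^ (δ/2 - 1)) * P) * L := by ring
      _ ≤ 16 * L := mul_le_mul_of_nonneg_right hcP hL0
      _ ≤ 4*M + 16*L + 1 := by linarith


/-- For every `δ > 0` there exists `C > 0` depending only on `δ` such that for all
`ν > 0` and `n ∈ ℝ³` with `|n| < ν`, setting `ρ = √(ν² - |n|²)`, the surface integral
over `S²` of `1/((ν + n·ω)/2)` is at most `C/(ρ^δ ν^(1-δ))`. -/
theorem stmt6 (δ : ℝ) (hδ : 0 < δ) :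
    ∃ C > 0, ∀ (ν : ℝ), 0 < ν → ∀ n : EuclideanSpace ℝ (Fin 3), ‖n‖ < ν →
      (∫ ω : Metric.sphere (0 : EuclideanSpace ℝ (Fin 3)) 1,
          1 / ((ν + (inner ℝ n (ω : EuclideanSpace ℝ (Fin 3)) : ℝ)) / 2)
          ∂((volume : Measure (EuclideanSpace ℝ (Fin 3))).toSphere))
        ≤ C / (Real.sqrt (ν ^ 2 - ‖n‖ ^ 2) ^ δ * ν ^ (1 - δ)) := by
  obtain ⟨C, hC, H⟩ := aux6_main (min δ 1) (lt_min hδ one_pos) (min_le_right _ _)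
  refine ⟨C, hC, ?_⟩
  intro ν hν n hn
  have ha0 : 0 ≤ ‖n‖ := norm_nonneg n
  have hρ2 : 0 < ν^2 - ‖n‖^2 := by nlinarith
  have hρ0 : 0 < Real.sqrt (ν^2 - ‖n‖^2) := Real.sqrt_pos.mpr hρ2
  have hρν : Real.sqrt (ν^2 - ‖n‖^2) ≤ ν := by
    calc Real.sqrt (ν^2 - ‖n‖^2) ≤ Real.sqrt (ν^2) := Real.sqrt_le_sqrt (by nlinarith)
      _ = ν := Real.sqrt_sq hν.le
  set ρ : ℝ := Real.sqrt (ν^2 - ‖n‖^2) with hρdef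
  have hq0 : 0 < ρ/ν := by positivity
  have hq1 : ρ/ν ≤ 1 := (div_le_one hν).mpr hρν
  have hiden : ∀ e : ℝ, ρ^e * ν^(1-e) = (ρ/ν)^e * ν := by
    intro e
    rw [Real.div_rpow hρ0.le hν.le, Real.rpow_sub hν, Real.rpow_one]
    have hνe : ν^e ≠ 0 := (Real.rpow_pos_of_pos hν e).ne'
    field_simp
  have hmono : (ρ/ν)^δ ≤ (ρ/ν)^(min δ 1) :=
    Real.rpow_le_rpow_of_exponent_ge hq0 hq1 (min_le_left δ 1)
  have hDD' : ρ^δ * ν^(1-δ) ≤ ρ^(min δ 1) * ν^(1-(min δ 1)) := by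
    rw [hiden δ, hiden (min δ 1)]
    exact mul_le_mul_of_nonneg_right hmono hν.le
  have hD : 0 < ρ^δ * ν^(1-δ) :=
    mul_pos (Real.rpow_pos_of_pos hρ0 _) (Real.rpow_pos_of_pos hν _)
  exact (H ν hν n hn).trans (div_le_div_of_nonneg_left hC.le hD hDD')
end

section
/- Let ν > 0 and n ∈ R^3 with |n| < ν, and set ρ := sqrt(ν² - |n|²). For every δ > 0 there exists a constant C > 0 depending only on δ such that the surface integral over S² of 4/(ν² − (n·ω)²) dω is at most C/(ρ^δ ν^{2−δ}). -/
open MeasureTheory Real Set Metric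

local notation "E3" => EuclideanSpace ℝ (Fin 3)

section helpers

lemma int1d {s : ℝ} (hs : -1 < s) :
    Integrable (fun x : ℝ => |x| ^ s * Real.exp (-x ^ 2)) := by
  have base : IntegrableOn (fun x : ℝ => |x| ^ s * Real.exp (-x ^ 2)) (Ioi 0) := by
    have h := integrableOn_rpow_mul_exp_neg_mul_sq (one_pos) hs
    simp only [neg_one_mul] at h
    exact h.congr_fun (fun x hx => by rw [abs_of_pos hx]) measurableSet_Ioi
  rw [← integrableOn_univ, ← Iio_union_Ici (a := (0:ℝ)), integrableOn_union]
  constructor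
  · have h2 : IntegrableOn ((fun x : ℝ => |x| ^ s * Real.exp (-x ^ 2)) ∘ Neg.neg)
        (Neg.neg ⁻¹' (Ioi 0)) := ((Measure.measurePreserving_neg
        (volume : Measure ℝ)).integrableOn_comp_preimage
        (Homeomorph.neg ℝ).measurableEmbedding).2 base
    simpa [Function.comp_def] using h2
  · rw [integrableOn_Ici_iff_integrableOn_Ioi]
    exact base

lemma amgm3 {a b c p q r : ℝ} (ha : 0 ≤ a) (hb : 0 ≤ b) (hc : 0 ≤ c)
    (hp : 0 < p) (hq : 0 < q) (hr : 0 < r) (hpqr : p + q + r = 1) :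
    a ^ p * b ^ q * c ^ r ≤ a + b + c := by
  set M := max a (max b c) with hM
  have haM : a ≤ M := le_max_left _ _
  have hbM : b ≤ M := le_trans (le_max_left _ _) (le_max_right _ _)
  have hcM : c ≤ M := le_trans (le_max_right _ _) (le_max_right _ _)
  have hM0 : 0 ≤ M := le_trans ha haM
  have hMsum : M ≤ a + b + c := by
    rcases max_cases a (max b c) with ⟨h1, _⟩ | ⟨h1, _⟩
    · rw [hM, h1]; linarith
    · rw [hM, h1]; rcases max_cases b c with ⟨h2, _⟩ | ⟨h2, _⟩ <;> rw [h2] <;> linarith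
  rcases eq_or_lt_of_le hM0 with h0 | h0
  · have ha0 : a = 0 := le_antisymm (h0 ▸ haM) ha
    rw [ha0, Real.zero_rpow hp.ne', zero_mul, zero_mul]
    linarith
  · have h1 : a ^ p ≤ M ^ p := Real.rpow_le_rpow ha haM hp.le
    have h2 : b ^ q ≤ M ^ q := Real.rpow_le_rpow hb hbM hq.le
    have h3 : c ^ r ≤ M ^ r := Real.rpow_le_rpow hc hcM hr.le
    calc a ^ p * b ^ q * c ^ r ≤ M ^ p * M ^ q * M ^ r := by
          apply mul_le_mul (mul_le_mul h1 h2 (Real.rpow_nonneg hb q)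
            (Real.rpow_nonneg hM0 p)) h3 (Real.rpow_nonneg hc r)
            (mul_nonneg (Real.rpow_nonneg hM0 p) (Real.rpow_nonneg hM0 q))
        _ = M ^ (p + q + r) := by rw [← Real.rpow_add h0, ← Real.rpow_add h0]
        _ = M := by rw [hpqr, Real.rpow_one]
        _ ≤ a + b + c := hMsum

noncomputable def Kc : ℝ := ∫ r in Ioi (0:ℝ), r ^ 2 * Real.exp (-r ^ 2)

lemma Kc_pos : 0 < Kc := by
  have hint : IntegrableOn (fun r : ℝ => r ^ 2 * Real.exp (-r ^ 2)) (Ioi 0) := by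
    have h := integrableOn_rpow_mul_exp_neg_mul_sq (one_pos) (s := 2) (by norm_num)
    simp only [neg_one_mul] at h
    exact h.congr_fun (fun x hx => by simp) measurableSet_Ioi
  rw [Kc]
  apply (setIntegral_pos_iff_support_of_nonneg_ae ?_ hint).2
  · have : (Function.support fun r : ℝ => r ^ 2 * Real.exp (-r ^ 2)) ∩ Ioi 0 = Ioi 0 := by
      apply inter_eq_self_of_subset_right
      intro x hx
      have hx' : x ≠ 0 := ne_of_gt hx
      simp only [Function.mem_support]
      positivity
    rw [this]
    simp
  · filter_upwards [ae_restrict_mem measurableSet_Ioi] with x hx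
    positivity

lemma sphere_to_gauss (F : E3 → ℝ) :
    (∫ ω : sphere (0:E3) 1, F ω ∂((volume : Measure E3).toSphere)) * Kc
      = ∫ x : E3, F (‖x‖⁻¹ • x) * Real.exp (-‖x‖ ^ 2) := by
  have hdim : Module.finrank ℝ E3 - 1 = 2 := by
    simp [finrank_euclideanSpace_fin]
  calc (∫ ω : sphere (0:E3) 1, F ω ∂((volume : Measure E3).toSphere)) * Kc
      = (∫ ω : sphere (0:E3) 1, F ω ∂((volume : Measure E3).toSphere)) *
        (∫ r : Ioi (0:ℝ), Real.exp (-(r:ℝ) ^ 2) ∂(Measure.volumeIoiPow 2)) := by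
        congr 1
        simp only [Measure.volumeIoiPow, ENNReal.ofReal]
        rw [integral_withDensity_eq_integral_smul
            ((measurable_subtype_coe.pow_const _).real_toNNReal),
          integral_subtype_comap measurableSet_Ioi
            (fun a : ℝ => (a ^ 2).toNNReal • Real.exp (-a ^ 2)), Kc]
        refine setIntegral_congr_fun measurableSet_Ioi (fun x hx => ?_)
        rw [NNReal.smul_def, Real.coe_toNNReal _ (sq_nonneg x), smul_eq_mul]
    _ = ∫ p : sphere (0:E3) 1 × Ioi (0:ℝ), F p.1 * Real.exp (-(p.2:ℝ) ^ 2)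
          ∂(((volume : Measure E3).toSphere).prod (Measure.volumeIoiPow 2)) :=
        (integral_prod_mul _ _).symm
    _ = ∫ x : ({0}ᶜ : Set E3), F (‖x.1‖⁻¹ • x.1) * Real.exp (-‖x.1‖ ^ 2)
          ∂((volume : Measure E3).comap (↑)) := by
        conv_lhs => rw [show Measure.volumeIoiPow 2
          = Measure.volumeIoiPow (Module.finrank ℝ E3 - 1) by rw [hdim]]
        rw [← (volume : Measure E3).measurePreserving_homeomorphUnitSphereProd.integral_comp
            (Homeomorph.measurableEmbedding _) (fun p => F p.1 * Real.exp (-(p.2:ℝ) ^ 2))]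
        simp only [homeomorphUnitSphereProd_apply_fst_coe, homeomorphUnitSphereProd_apply_snd_coe,
          one_smul, div_one]
    _ = ∫ x : E3, F (‖x‖⁻¹ • x) * Real.exp (-‖x‖ ^ 2) := by
        rw [integral_subtype_comap (measurableSet_singleton (0:E3)).compl
          (fun x => F (‖x‖⁻¹ • x) * Real.exp (-‖x‖ ^ 2)),
          MeasureTheory.restrict_compl_singleton]

lemma refl_exists (n : E3) :
    ∃ T : E3 ≃ₗᵢ[ℝ] E3, ∀ y : E3, (inner ℝ n (T y) : ℝ) = ‖n‖ * y 0 := by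
  set v : E3 := ‖n‖ • EuclideanSpace.single 0 1 with hv
  have hnv : ‖v‖ = ‖n‖ := by
    rw [hv, norm_smul, EuclideanSpace.norm_single]
    simp
  set T := Submodule.reflection (ℝ ∙ (v - n))ᗮ with hT
  have hTv : T v = n := Submodule.reflection_sub hnv
  have hTn : T n = v := by
    have := Submodule.reflection_involutive (ℝ ∙ (v - n))ᗮ v
    rw [hTv] at this
    exact this
  refine ⟨T, fun y => ?_⟩
  have h1 : (inner ℝ n (T y) : ℝ) = inner ℝ (T n) (T (T y)) := by
    rw [LinearIsometryEquiv.inner_map_map]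
  rw [h1, Submodule.reflection_involutive _ y, hTn, hv, real_inner_smul_left,
    EuclideanSpace.inner_single_left]
  simp

lemma gauss_int_E3 : Integrable (fun x : E3 => Real.exp (-‖x‖ ^ 2)) := by
  have hgpi : Integrable (fun z : Fin 3 → ℝ => ∏ i, Real.exp (-(z i) ^ 2)) :=
    Integrable.fin_nat_prod (fun i => by
      simpa [neg_one_mul] using integrable_exp_neg_mul_sq (one_pos))
  have h := ((EuclideanSpace.volume_preserving_symm_measurableEquiv_toLp (Fin 3)).integrable_comp_emb
    (MeasurableEquiv.measurableEmbedding _)).2 hgpi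
  refine h.congr (ae_of_all _ fun x => ?_)
  have hn : ‖x‖ ^ 2 = ∑ i, (x i) ^ 2 := by
    rw [EuclideanSpace.norm_eq, Real.sq_sqrt (by positivity)]
    simp [sq_abs]
  beta_reduce
  rw [Function.comp_apply, hn]
  rw [show -(∑ i, (x i) ^ 2) = ∑ i, -((x i) ^ 2) by rw [← Finset.sum_neg_distrib],
    Real.exp_sum]
  rfl

end helpers

set_option maxHeartbeats 2000000 in
lemma main_small {δ : ℝ} (hδ0 : 0 < δ) (hδ1 : δ < 1) :
    ∃ C > 0, ∀ (ν : ℝ), 0 < ν → ∀ n : E3, ‖n‖ < ν →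
      (∫ ω : sphere (0 : E3) 1,
          4 / (ν ^ 2 - (inner ℝ n (ω : E3) : ℝ) ^ 2)
          ∂((volume : Measure E3).toSphere))
        ≤ C / (Real.sqrt (ν ^ 2 - ‖n‖ ^ 2) ^ δ * ν ^ (2 - δ)) := by
  -- the comparison function, depending only on δ
  set c : ℝ := (δ - 2) / 2 with hc
  set G : (Fin 3 → ℝ) → ℝ := fun z =>
    4 * ((z 0) ^ 2 + (z 1) ^ 2 + (z 2) ^ 2)
      * Real.exp (-((z 0) ^ 2 + (z 1) ^ 2 + (z 2) ^ 2))
      * (|z 0| ^ (-δ) * |z 1| ^ c * |z 2| ^ c) with hG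
  -- integrability of G
  have hA1 : Integrable (fun x : ℝ => |x| ^ (-δ) * Real.exp (-x ^ 2)) :=
    int1d (by linarith)
  have hA2 : Integrable (fun x : ℝ => x ^ 2 * (|x| ^ (-δ) * Real.exp (-x ^ 2))) := by
    refine (int1d (s := 2 - δ) (by linarith)).congr (ae_of_all _ fun x => ?_)
    beta_reduce
    rcases eq_or_ne x 0 with h | h
    · simp [h, Real.zero_rpow (by linarith : (2:ℝ) - δ ≠ 0),
        Real.zero_rpow (by linarith : -δ ≠ 0)]
    · have hx : (0:ℝ) < |x| := abs_pos.2 h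
      rw [show (2 - δ : ℝ) = 2 + (-δ) by ring, Real.rpow_add hx, Real.rpow_two, sq_abs]
      ring
  have hB1 : Integrable (fun x : ℝ => |x| ^ c * Real.exp (-x ^ 2)) :=
    int1d (by rw [hc]; linarith)
  have hB2 : Integrable (fun x : ℝ => x ^ 2 * (|x| ^ c * Real.exp (-x ^ 2))) := by
    refine (int1d (s := 2 + c) (by rw [hc]; linarith)).congr (ae_of_all _ fun x => ?_)
    beta_reduce
    rcases eq_or_ne x 0 with h | h
    · simp [h, Real.zero_rpow (by rw [hc]; intro hcon; linarith [hcon] : (2:ℝ) + c ≠ 0),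
        Real.zero_rpow (by rw [hc]; intro hcon; linarith [hcon] : c ≠ 0)]
    · have hx : (0:ℝ) < |x| := abs_pos.2 h
      rw [Real.rpow_add hx, Real.rpow_two, sq_abs]
      ring
  have hG_int : Integrable G := by
    have h1 : Integrable (fun z : Fin 3 → ℝ => ∏ i,
        ![fun x : ℝ => x ^ 2 * (|x| ^ (-δ) * Real.exp (-x ^ 2)),
          fun x : ℝ => |x| ^ c * Real.exp (-x ^ 2),
          fun x : ℝ => |x| ^ c * Real.exp (-x ^ 2)] i (z i)) :=
      Integrable.fin_nat_prod (fun i => by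
        fin_cases i
        · simpa using hA2
        · simpa using hB1
        · simpa using hB1)
    have h2 : Integrable (fun z : Fin 3 → ℝ => ∏ i,
        ![fun x : ℝ => |x| ^ (-δ) * Real.exp (-x ^ 2),
          fun x : ℝ => x ^ 2 * (|x| ^ c * Real.exp (-x ^ 2)),
          fun x : ℝ => |x| ^ c * Real.exp (-x ^ 2)] i (z i)) :=
      Integrable.fin_nat_prod (fun i => by
        fin_cases i
        · simpa using hA1
        · simpa using hB2
        · simpa using hB1)
    have h3 : Integrable (fun z : Fin 3 → ℝ => ∏ i,
        ![fun x : ℝ => |x| ^ (-δ) * Real.exp (-x ^ 2),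
          fun x : ℝ => |x| ^ c * Real.exp (-x ^ 2),
          fun x : ℝ => x ^ 2 * (|x| ^ c * Real.exp (-x ^ 2))] i (z i)) :=
      Integrable.fin_nat_prod (fun i => by
        fin_cases i
        · simpa using hA1
        · simpa using hB1
        · simpa using hB2)
    refine (((h1.add h2).add h3).const_mul 4).congr (ae_of_all _ fun z => ?_)
    beta_reduce
    simp only [Fin.prod_univ_three, Matrix.cons_val_zero, Matrix.cons_val_one,
      Matrix.head_cons, Matrix.cons_val_two, Matrix.tail_cons]
    rw [hG]
    beta_reduce
    rw [show -((z 0) ^ 2 + (z 1) ^ 2 + (z 2) ^ 2)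
        = -(z 0) ^ 2 + (-(z 1) ^ 2 + -(z 2) ^ 2) by ring, Real.exp_add, Real.exp_add]
    simp only [Pi.add_apply]
    ring
  -- G is nonnegative
  have hG_nonneg : ∀ z, 0 ≤ G z := fun z => by
    rw [hG]; beta_reduce
    have w0 := Real.rpow_nonneg (abs_nonneg (z 0)) (-δ)
    have w1 := Real.rpow_nonneg (abs_nonneg (z 1)) c
    have w2 := Real.rpow_nonneg (abs_nonneg (z 2)) c
    have hS : 0 ≤ (z 0) ^ 2 + (z 1) ^ 2 + (z 2) ^ 2 := by positivity
    have he := Real.exp_nonneg (-((z 0) ^ 2 + (z 1) ^ 2 + (z 2) ^ 2))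
    exact mul_nonneg (mul_nonneg (mul_nonneg (by norm_num) hS) he)
      (mul_nonneg (mul_nonneg w0 w1) w2)
  set C₀ : ℝ := ∫ z, G z with hC₀
  have hC₀_nonneg : 0 ≤ C₀ := integral_nonneg hG_nonneg
  refine ⟨(C₀ + 1) / Kc, div_pos (by linarith) Kc_pos, fun ν hν n hn => ?_⟩
  have hρ2pos : 0 < ν ^ 2 - ‖n‖ ^ 2 := by nlinarith [norm_nonneg n]
  set ρ := Real.sqrt (ν ^ 2 - ‖n‖ ^ 2) with hρdef
  have hρpos : 0 < ρ := Real.sqrt_pos.2 hρ2pos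
  have hρsq : ρ ^ 2 = ν ^ 2 - ‖n‖ ^ 2 := Real.sq_sqrt hρ2pos.le
  obtain ⟨T, hT⟩ := refl_exists n
  set Φ : E3 → ℝ := fun x =>
    4 / (ν ^ 2 - (inner ℝ n (‖x‖⁻¹ • x) : ℝ) ^ 2) * Real.exp (-‖x‖ ^ 2) with hΦ
  have hinner_le : ∀ x : E3, (inner ℝ n (‖x‖⁻¹ • x) : ℝ) ^ 2 ≤ ‖n‖ ^ 2 := by
    intro x
    have h1 : |(inner ℝ n (‖x‖⁻¹ • x) : ℝ)| ≤ ‖n‖ := by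
      rcases eq_or_ne x 0 with h | h
      · simp [h, norm_nonneg]
      · calc |(inner ℝ n (‖x‖⁻¹ • x) : ℝ)| ≤ ‖n‖ * ‖‖x‖⁻¹ • x‖ := abs_real_inner_le_norm _ _
          _ = ‖n‖ := by
              rw [norm_smul, norm_inv, norm_norm,
                inv_mul_cancel₀ (norm_ne_zero_iff.2 h), mul_one]
    calc (inner ℝ n (‖x‖⁻¹ • x) : ℝ) ^ 2 = |(inner ℝ n (‖x‖⁻¹ • x) : ℝ)| ^ 2 := (sq_abs _).symm
      _ ≤ ‖n‖ ^ 2 := pow_le_pow_left₀ (abs_nonneg _) h1 2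
  have hden_pos : ∀ x : E3, 0 < ν ^ 2 - (inner ℝ n (‖x‖⁻¹ • x) : ℝ) ^ 2 := fun x => by
    have := hinner_le x; linarith
  have hΦ_nonneg : ∀ x, 0 ≤ Φ x := fun x => by
    rw [hΦ]; beta_reduce
    exact mul_nonneg (div_nonneg (by norm_num) (hden_pos x).le) (Real.exp_nonneg _)
  have hΦ_meas : Measurable Φ := by
    apply Measurable.mul
    · apply Measurable.div measurable_const
      apply Measurable.sub measurable_const
      apply Measurable.pow _ measurable_const
      exact Measurable.inner measurable_const ((measurable_norm.inv).smul measurable_id)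
    · exact ((measurable_norm.pow measurable_const).neg).exp
  have hΦ_int : Integrable Φ := by
    refine Integrable.mono' (gauss_int_E3.const_mul (4 / (ν ^ 2 - ‖n‖ ^ 2)))
      hΦ_meas.aestronglyMeasurable (ae_of_all _ fun x => ?_)
    rw [Real.norm_eq_abs, abs_of_nonneg (hΦ_nonneg x), hΦ]
    beta_reduce
    have h1 : 4 / (ν ^ 2 - (inner ℝ n (‖x‖⁻¹ • x) : ℝ) ^ 2) ≤ 4 / (ν ^ 2 - ‖n‖ ^ 2) :=
      div_le_div_of_nonneg_left (by norm_num) hρ2pos (by linarith [hinner_le x])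
    exact mul_le_mul_of_nonneg_right h1 (Real.exp_nonneg _)
  set es := ((MeasurableEquiv.toLp 2 (Fin 3 → ℝ)).symm).symm with hes
  set H : (Fin 3 → ℝ) → ℝ := fun z => Φ (T (es z)) with hH
  have hstep1 : (∫ ω : sphere (0:E3) 1, 4 / (ν ^ 2 - (inner ℝ n (ω:E3) : ℝ) ^ 2)
      ∂((volume : Measure E3).toSphere)) * Kc = ∫ x : E3, Φ x :=
    sphere_to_gauss (fun x => 4 / (ν ^ 2 - (inner ℝ n x : ℝ) ^ 2))
  have hstep2 : ∫ x : E3, Φ x = ∫ y : E3, Φ (T y) :=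
    (T.measurePreserving.integral_comp T.toHomeomorph.measurableEmbedding Φ).symm
  have hstep3 : ∫ y : E3, Φ (T y) = ∫ z, H z := by
    rw [hH]
    exact (((EuclideanSpace.volume_preserving_symm_measurableEquiv_toLp (Fin 3)).symm).integral_comp
      (MeasurableEquiv.measurableEmbedding _) (fun y => Φ (T y))).symm
  have hH_int : Integrable H := by
    rw [hH]
    have i1 : Integrable (fun y : E3 => Φ (T y)) :=
      (T.measurePreserving.integrable_comp_emb T.toHomeomorph.measurableEmbedding).2 hΦ_int
    exact (((EuclideanSpace.volume_preserving_symm_measurableEquiv_toLp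
      (Fin 3)).symm).integrable_comp_emb (MeasurableEquiv.measurableEmbedding _)).2 i1
  -- the pointwise a.e. bound
  have hae : ∀ (i : Fin 3), ∀ᵐ z : Fin 3 → ℝ ∂(volume), z i ≠ 0 := by
    intro i
    rw [volume_pi]
    exact Measure.ae_eval_ne _ i 0
  have key : ∀ᵐ z : Fin 3 → ℝ ∂(volume),
      H z ≤ ρ ^ (-δ) * ν ^ (δ - 2) * G z := by
    filter_upwards [hae 0, hae 1, hae 2] with z hz0 hz1 hz2
    set S := (z 0) ^ 2 + (z 1) ^ 2 + (z 2) ^ 2 with hSdef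
    have hz0sq : 0 < (z 0) ^ 2 :=
      lt_of_le_of_ne (sq_nonneg _) (Ne.symm (pow_ne_zero 2 hz0))
    have hS_pos : 0 < S := by
      rw [hSdef]; nlinarith [sq_nonneg (z 1), sq_nonneg (z 2)]
    have hesz : ∀ i, es z i = z i := fun i => rfl
    have hnorm : ‖es z‖ = Real.sqrt S := by
      rw [EuclideanSpace.norm_eq]
      congr 1
      rw [Fin.sum_univ_three, hSdef]
      simp [hesz, sq_abs]
    have hHz : H z = 4 / (ν ^ 2 - ((Real.sqrt S)⁻¹ * (‖n‖ * z 0)) ^ 2)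
        * Real.exp (-S) := by
      rw [hH]
      beta_reduce
      rw [hΦ]
      beta_reduce
      rw [T.norm_map (es z), hnorm, real_inner_smul_right, hT (es z), hesz 0,
        Real.sq_sqrt hS_pos.le]
    set A := ρ ^ 2 * (z 0) ^ 2 + ν ^ 2 * (z 1) ^ 2 + ν ^ 2 * (z 2) ^ 2 with hAdef
    have hden : ν ^ 2 - ((Real.sqrt S)⁻¹ * (‖n‖ * z 0)) ^ 2 = A / S := by
      rw [mul_pow, inv_pow, Real.sq_sqrt hS_pos.le, eq_div_iff hS_pos.ne']
      have hexp : (ν ^ 2 - S⁻¹ * (‖n‖ * z 0) ^ 2) * S = ν ^ 2 * S - (‖n‖ * z 0) ^ 2 := by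
        field_simp
      rw [hexp, hAdef, hSdef]
      linear_combination (-(z 0) ^ 2) * hρsq
    -- AM-GM lower bound for A
    set q : ℝ := (2 - δ) / 2 with hq
    set W := |z 0| ^ δ * |z 1| ^ q * |z 2| ^ q with hW
    have hgm : ρ ^ δ * ν ^ (2 - δ) * W ≤ A := by
      have h := amgm3 (a := ρ ^ 2 * (z 0) ^ 2) (b := ν ^ 2 * (z 1) ^ 2)
        (c := ν ^ 2 * (z 2) ^ 2) (p := δ / 2) (q := (2 - δ) / 4) (r := (2 - δ) / 4)
        (by positivity) (by positivity) (by positivity)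
        (by linarith) (by linarith) (by linarith) (by ring)
      refine le_trans (le_of_eq ?_) h
      have e0 : (ρ ^ 2 * (z 0) ^ 2) ^ (δ / 2 : ℝ) = ρ ^ δ * |z 0| ^ δ := by
        rw [show ρ ^ 2 * (z 0) ^ 2 = (ρ * |z 0|) ^ 2 by rw [mul_pow, sq_abs],
          ← Real.rpow_two, ← Real.rpow_mul (by positivity),
          show (2 : ℝ) * (δ / 2) = δ by ring,
          Real.mul_rpow hρpos.le (abs_nonneg _)]
      have e1 : (ν ^ 2 * (z 1) ^ 2) ^ ((2 - δ) / 4 : ℝ) = ν ^ q * |z 1| ^ q := by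
        rw [show ν ^ 2 * (z 1) ^ 2 = (ν * |z 1|) ^ 2 by rw [mul_pow, sq_abs],
          ← Real.rpow_two, ← Real.rpow_mul (by positivity),
          show (2 : ℝ) * ((2 - δ) / 4) = q by rw [hq]; ring,
          Real.mul_rpow hν.le (abs_nonneg _)]
      have e2 : (ν ^ 2 * (z 2) ^ 2) ^ ((2 - δ) / 4 : ℝ) = ν ^ q * |z 2| ^ q := by
        rw [show ν ^ 2 * (z 2) ^ 2 = (ν * |z 2|) ^ 2 by rw [mul_pow, sq_abs],
          ← Real.rpow_two, ← Real.rpow_mul (by positivity),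
          show (2 : ℝ) * ((2 - δ) / 4) = q by rw [hq]; ring,
          Real.mul_rpow hν.le (abs_nonneg _)]
      rw [e0, e1, e2, hW]
      have hνq : ν ^ q * ν ^ q = ν ^ (2 - δ) := by
        rw [← Real.rpow_add hν, show q + q = 2 - δ by rw [hq]; ring]
      rw [← hνq]
      ring
    have hW_pos : 0 < W := by
      rw [hW]
      exact mul_pos (mul_pos (Real.rpow_pos_of_pos (abs_pos.2 hz0) _)
        (Real.rpow_pos_of_pos (abs_pos.2 hz1) _)) (Real.rpow_pos_of_pos (abs_pos.2 hz2) _)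
    have hB_pos : 0 < ρ ^ δ * ν ^ (2 - δ) * W :=
      mul_pos (mul_pos (Real.rpow_pos_of_pos hρpos _) (Real.rpow_pos_of_pos hν _)) hW_pos
    have hA_pos : 0 < A := lt_of_lt_of_le hB_pos hgm
    have hzc1 : |z 1| ^ c = (|z 1| ^ q)⁻¹ := by
      rw [show c = -q by rw [hc, hq]; ring, Real.rpow_neg (abs_nonneg _)]
    have hzc2 : |z 2| ^ c = (|z 2| ^ q)⁻¹ := by
      rw [show c = -q by rw [hc, hq]; ring, Real.rpow_neg (abs_nonneg _)]
    calc H z = 4 * S * Real.exp (-S) / A := by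
          rw [hHz, hden, div_div_eq_mul_div]; ring
      _ ≤ 4 * S * Real.exp (-S) / (ρ ^ δ * ν ^ (2 - δ) * W) :=
          div_le_div_of_nonneg_left (by positivity) hB_pos hgm
      _ = ρ ^ (-δ) * ν ^ (δ - 2) * G z := by
          rw [hG]
          beta_reduce
          rw [← hSdef, Real.rpow_neg hρpos.le, show (δ - 2 : ℝ) = -(2 - δ) by ring,
            Real.rpow_neg hν.le, Real.rpow_neg (abs_nonneg (z 0)), hzc1, hzc2, hW]
          have n1 : ρ ^ δ ≠ 0 := (Real.rpow_pos_of_pos hρpos _).ne'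
          have n2 : ν ^ (2 - δ) ≠ 0 := (Real.rpow_pos_of_pos hν _).ne'
          have n3 : |z 0| ^ δ ≠ 0 := (Real.rpow_pos_of_pos (abs_pos.2 hz0) _).ne'
          have n4 : |z 1| ^ q ≠ 0 := (Real.rpow_pos_of_pos (abs_pos.2 hz1) _).ne'
          have n5 : |z 2| ^ q ≠ 0 := (Real.rpow_pos_of_pos (abs_pos.2 hz2) _).ne'
          field_simp
  have hint_final : ∫ z, H z ≤ ρ ^ (-δ) * ν ^ (δ - 2) * C₀ := by
    have h := integral_mono_ae hH_int (hG_int.const_mul (ρ ^ (-δ) * ν ^ (δ - 2))) key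
    rwa [integral_const_mul] at h
  have hIKc : (∫ ω : sphere (0:E3) 1, 4 / (ν ^ 2 - (inner ℝ n (ω:E3) : ℝ) ^ 2)
      ∂((volume : Measure E3).toSphere)) = (∫ x : E3, Φ x) / Kc := by
    rw [eq_div_iff Kc_pos.ne']; exact hstep1
  rw [hIKc, hstep2, hstep3]
  have hb1 : ∫ z, H z ≤ ρ ^ (-δ) * ν ^ (δ - 2) * (C₀ + 1) := by
    refine le_trans hint_final (mul_le_mul_of_nonneg_left (by linarith) ?_)
    positivity
  calc (∫ z, H z) / Kc ≤ (ρ ^ (-δ) * ν ^ (δ - 2) * (C₀ + 1)) / Kc :=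
        (div_le_div_iff_of_pos_right Kc_pos).2 hb1
    _ = (C₀ + 1) / Kc / (ρ ^ δ * ν ^ (2 - δ)) := by
        rw [Real.rpow_neg hρpos.le, show (δ - 2 : ℝ) = -(2 - δ) by ring,
          Real.rpow_neg hν.le]
        have n1 : ρ ^ δ ≠ 0 := (Real.rpow_pos_of_pos hρpos _).ne'
        have n2 : ν ^ (2 - δ) ≠ 0 := (Real.rpow_pos_of_pos hν _).ne'
        field_simp

/-- For every `δ > 0` there exists `C > 0` depending only on `δ` such that for all
`ν > 0` and `n ∈ ℝ³` with `|n| < ν`, setting `ρ = √(ν² - |n|²)`, the surface integral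
over `S²` of `4/(ν² - (n·ω)²)` is at most `C/(ρ^δ ν^(2-δ))`. -/
theorem stmt9 (δ : ℝ) (hδ : 0 < δ) :
    ∃ C > 0, ∀ (ν : ℝ), 0 < ν → ∀ n : EuclideanSpace ℝ (Fin 3), ‖n‖ < ν →
      (∫ ω : Metric.sphere (0 : EuclideanSpace ℝ (Fin 3)) 1,
          4 / (ν ^ 2 - (inner ℝ n (ω : EuclideanSpace ℝ (Fin 3)) : ℝ) ^ 2)
          ∂((volume : Measure (EuclideanSpace ℝ (Fin 3))).toSphere))
        ≤ C / (Real.sqrt (ν ^ 2 - ‖n‖ ^ 2) ^ δ * ν ^ (2 - δ)) := by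
  obtain ⟨C, hC, h⟩ := main_small (δ := min δ (1/2)) (lt_min hδ (by norm_num))
    (lt_of_le_of_lt (min_le_right _ _) (by norm_num))
  refine ⟨C, hC, fun ν hν n hn => (h ν hν n hn).trans ?_⟩
  set ρ := Real.sqrt (ν ^ 2 - ‖n‖ ^ 2) with hρ
  have hρ2 : ν ^ 2 - ‖n‖ ^ 2 > 0 := by nlinarith [norm_nonneg n]
  have hρpos : 0 < ρ := Real.sqrt_pos.2 hρ2
  have hρν : ρ ≤ ν := by
    rw [hρ]
    calc Real.sqrt (ν ^ 2 - ‖n‖ ^ 2) ≤ Real.sqrt (ν ^ 2) :=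
          Real.sqrt_le_sqrt (by nlinarith [norm_nonneg n])
      _ = ν := by rw [Real.sqrt_sq hν.le]
  have key : ρ ^ δ * ν ^ (2 - δ) ≤ ρ ^ (min δ (1/2)) * ν ^ (2 - min δ (1/2)) := by
    have hprod : ∀ s : ℝ, ρ ^ s * ν ^ (2 - s) = (ρ / ν) ^ s * ν ^ (2:ℝ) := by
      intro s
      rw [Real.div_rpow hρpos.le hν.le, Real.rpow_sub hν]
      field_simp
    rw [hprod δ, hprod (min δ (1/2))]
    have h1 : (ρ / ν) ^ δ ≤ (ρ / ν) ^ (min δ (1/2)) :=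
      Real.rpow_le_rpow_of_exponent_ge (by positivity) (div_le_one_of_le₀ hρν hν.le)
        (min_le_left _ _)
    have h2 : (0:ℝ) ≤ ν ^ (2:ℝ) := Real.rpow_nonneg hν.le _
    exact mul_le_mul_of_nonneg_right h1 h2
  apply div_le_div_of_nonneg_left hC.le (by positivity) key
end

section
/- For 0 < b < 1 and any fixed unit vector u ∈ R^3, the integral over R^3 of e^{-|q|} / (|q|^{2 + b/2} · sin^b(φ(q)/2)) dq is finite, where φ(q) ∈ [0, π] is the angle between u and q. -/
open MeasureTheory InnerProductGeometry Set

lemma aux_int1D {s : ℝ} (hs : s < 1) :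
    Integrable (fun x : ℝ => |x| ^ (-s) * Real.exp (-(|x| / 3))) := by
  have base : IntegrableOn (fun x : ℝ => x ^ (-s) * Real.exp (-(x / 3))) (Ioi 0) := by
    have h := integrableOn_rpow_mul_exp_neg_mul_rpow (p := 1) (s := -s) (b := 1/3)
      (by linarith) (by norm_num) (by norm_num)
    refine h.congr_fun (fun x hx => ?_) measurableSet_Ioi
    simp only [Real.rpow_one]
    ring_nf
  have hIoi : IntegrableOn (fun x : ℝ => |x| ^ (-s) * Real.exp (-(|x| / 3))) (Ioi 0) := by
    refine base.congr_fun (fun x hx => ?_) measurableSet_Ioi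
    rw [abs_of_pos hx]
  have hIic : IntegrableOn (fun x : ℝ => |x| ^ (-s) * Real.exp (-(|x| / 3))) (Iic 0) := by
    rw [← Measure.map_neg_eq_self (volume : Measure ℝ)]
    have m : MeasurableEmbedding fun x : ℝ => -x := (Homeomorph.neg ℝ).measurableEmbedding
    rw [m.integrableOn_map_iff]
    simp_rw [Function.comp_def, abs_neg, neg_preimage, neg_Iic, neg_zero]
    exact Iff.mpr integrableOn_Ici_iff_integrableOn_Ioi hIoi
  rw [← integrableOn_univ, ← Iic_union_Ioi (a := (0:ℝ))]
  exact hIic.union hIoi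

set_option maxHeartbeats 1000000 in
lemma key_int (b : ℝ) (hb : 0 < b) (hb1 : b < 1) :
    Integrable (fun q : EuclideanSpace ℝ (Fin 3) =>
      Real.exp (-‖q‖) /
        (‖q‖ ^ (2 + b / 2) *
          Real.sin (angle (EuclideanSpace.single 2 (1:ℝ)) q / 2) ^ b)) := by
  set s : ℝ := 2/3 + b/6 with hs_def
  have hs0 : 0 < s := by rw [hs_def]; linarith
  have hs1 : s < 1 := by rw [hs_def]; linarith
  -- the dominating function
  have hGint : Integrable (fun q : EuclideanSpace ℝ (Fin 3) =>
      2 ^ b * ∏ i, (|q i| ^ (-s) * Real.exp (-(|q i| / 3)))) := by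
    have e := (EuclideanSpace.volume_preserving_symm_measurableEquiv_toLp (Fin 3)).symm
    rw [← e.integrable_comp_emb (MeasurableEquiv.measurableEmbedding _)]
    have heq : ((fun q : EuclideanSpace ℝ (Fin 3) =>
        2 ^ b * ∏ i, (|q i| ^ (-s) * Real.exp (-(|q i| / 3)))) ∘
          (MeasurableEquiv.toLp 2 (Fin 3 → ℝ)).symm.symm)
        = fun w : Fin 3 → ℝ => 2 ^ b * ∏ i, (|w i| ^ (-s) * Real.exp (-(|w i| / 3))) := rfl
    rw [heq]
    exact (Integrable.fin_nat_prod (fun i => aux_int1D hs1)).const_mul _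
  -- measurability
  have hmeas : AEStronglyMeasurable (fun q : EuclideanSpace ℝ (Fin 3) =>
      Real.exp (-‖q‖) /
        (‖q‖ ^ (2 + b / 2) *
          Real.sin (angle (EuclideanSpace.single 2 (1:ℝ)) q / 2) ^ b)) volume := by
    apply Measurable.aestronglyMeasurable
    have hang : Measurable fun q : EuclideanSpace ℝ (Fin 3) =>
        angle (EuclideanSpace.single 2 (1:ℝ)) q := by
      unfold InnerProductGeometry.angle
      exact Real.continuous_arccos.measurable.comp
        (((continuous_const.inner continuous_id).measurable).div
          (measurable_norm.const_mul _))
    have hrpow1 : Measurable fun t : ℝ => t ^ (2 + b / 2) := by fun_prop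
    have hrpow2 : Measurable fun t : ℝ => t ^ b := by fun_prop
    exact (measurable_norm.neg.exp).div
      ((hrpow1.comp measurable_norm).mul
        (hrpow2.comp (Real.measurable_sin.comp (hang.div_const 2))))
  -- null coordinate hyperplanes
  have hnull : ∀ i : Fin 3, ∀ᵐ q : EuclideanSpace ℝ (Fin 3), q i ≠ 0 := by
    intro i
    rw [ae_iff]
    have hset : {q : EuclideanSpace ℝ (Fin 3) | ¬ q i ≠ 0}
        = (LinearMap.ker (innerₛₗ ℝ (EuclideanSpace.single i (1:ℝ))) : Set _) := by
      ext q
      simp [LinearMap.mem_ker, EuclideanSpace.inner_single_left]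
    rw [hset]
    refine Measure.addHaar_submodule _ _ (fun h => ?_)
    have h1 : EuclideanSpace.single i (1:ℝ) ∈
        LinearMap.ker (innerₛₗ ℝ (EuclideanSpace.single i (1:ℝ))) := by
      rw [h]; trivial
    simp [LinearMap.mem_ker, EuclideanSpace.inner_single_left,
      EuclideanSpace.single_apply] at h1
  refine hGint.mono' hmeas ?_
  filter_upwards [hnull 0, hnull 1, hnull 2] with q hx hy hz
  set x := q 0 with hx_def
  set y := q 1 with hy_def
  set z := q 2 with hz_def
  have hr2 : ‖q‖^2 = x^2 + y^2 + z^2 := by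
    rw [EuclideanSpace.norm_eq, Real.sq_sqrt (by positivity)]
    simp [Fin.sum_univ_three, Real.norm_eq_abs, sq_abs]
    rfl
  have habs : ∀ t : ℝ, t^2 ≤ ‖q‖^2 → |t| ≤ ‖q‖ := by
    intro t ht
    nlinarith [abs_nonneg t, norm_nonneg q, sq_abs t]
  have hxr : |x| ≤ ‖q‖ := habs x (by nlinarith [sq_nonneg y, sq_nonneg z])
  have hyr : |y| ≤ ‖q‖ := habs y (by nlinarith [sq_nonneg x, sq_nonneg z])
  have hzr' : |z| ≤ ‖q‖ := habs z (by nlinarith [sq_nonneg x, sq_nonneg y])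
  have hx2 : 0 < x^2 := (sq_nonneg x).lt_of_ne (Ne.symm (pow_ne_zero 2 hx))
  have hy2 : 0 < y^2 := (sq_nonneg y).lt_of_ne (Ne.symm (pow_ne_zero 2 hy))
  have hr0 : 0 < ‖q‖ := lt_of_lt_of_le (abs_pos.2 hx) hxr
  have hzr : |z| < ‖q‖ := by
    nlinarith [sq_abs z, abs_nonneg z, hr0]
  have hrz0 : 0 < ‖q‖ - z := by
    rcases abs_lt.1 hzr with ⟨h1, h2⟩; linarith
  have hrz2 : 0 < ‖q‖ + z := by
    rcases abs_lt.1 hzr with ⟨h1, h2⟩; linarith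
  -- angle computation
  have hinner : (inner ℝ (EuclideanSpace.single 2 (1:ℝ)) q : ℝ) = z := by
    rw [EuclideanSpace.inner_single_left]; simp
    rfl
  have hcos : Real.cos (angle (EuclideanSpace.single 2 (1:ℝ)) q) = z / ‖q‖ := by
    rw [cos_angle, hinner, EuclideanSpace.norm_single, norm_one, one_mul]
  have hsin : Real.sin (angle (EuclideanSpace.single 2 (1:ℝ)) q / 2)
      = Real.sqrt ((‖q‖ - z) / (2 * ‖q‖)) := by
    rw [Real.sin_half_eq_sqrt (angle_nonneg _ _)
      (by linarith [angle_le_pi (EuclideanSpace.single 2 (1:ℝ)) q, Real.pi_pos]), hcos]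
    congr 1
    rw [one_sub_div hr0.ne', div_div, mul_comm]
  have harg : (0:ℝ) ≤ (‖q‖ - z) / (2 * ‖q‖) := by positivity
  have hsinb : Real.sin (angle (EuclideanSpace.single 2 (1:ℝ)) q / 2) ^ b
      = ((‖q‖ - z) / (2 * ‖q‖)) ^ (b/2) := by
    rw [hsin, Real.sqrt_eq_rpow, ← Real.rpow_mul harg]
    congr 1
    ring
  have h2b : (0:ℝ) < 2 ^ b := Real.rpow_pos_of_pos two_pos b
  -- key inequality
  have e1 : (x^2+y^2)/(4*‖q‖^2) ≤ (‖q‖-z)/(2*‖q‖) := by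
    rw [div_le_div_iff₀ (by positivity) (by positivity)]
    nlinarith [mul_nonneg (mul_nonneg hr0.le hrz0.le) hrz0.le]
  have e2 : ((x^2+y^2)/(4*‖q‖^2)) ^ (b/2) ≤ ((‖q‖-z)/(2*‖q‖)) ^ (b/2) :=
    Real.rpow_le_rpow (by positivity) e1 (by positivity)
  have e3 : ((x^2+y^2)/(4*‖q‖^2)) ^ (b/2) = (x^2+y^2)^(b/2) / (2^b * ‖q‖^b) := by
    rw [Real.div_rpow (by positivity) (by positivity)]
    congr 1
    rw [Real.mul_rpow (by norm_num) (by positivity)]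
    congr 1
    · rw [show (4:ℝ) = 2^(2:ℕ) by norm_num, ← Real.rpow_natCast 2 2,
        ← Real.rpow_mul (by norm_num)]
      congr 1
      push_cast
      ring
    · rw [← Real.rpow_natCast ‖q‖ 2, ← Real.rpow_mul hr0.le]
      congr 1
      push_cast
      ring
  have h5 : ‖q‖ ^ (2 - b/2) * (x^2+y^2)^(b/2)
      = 2 ^ b * (‖q‖ ^ (2 + b/2) * ((x^2+y^2)/(4*‖q‖^2)) ^ (b/2)) := by
    have hsplit : ‖q‖ ^ ((2:ℝ) + b/2) = ‖q‖ ^ ((2:ℝ) - b/2) * ‖q‖ ^ b := by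
      rw [← Real.rpow_add hr0]; ring_nf
    rw [hsplit, e3]
    have hrb : (0:ℝ) < ‖q‖ ^ b := Real.rpow_pos_of_pos hr0 b
    have h2b' : ((2:ℝ) ^ b) ≠ 0 := (Real.rpow_pos_of_pos two_pos b).ne'
    have hrb' : (‖q‖ ^ b) ≠ 0 := hrb.ne'
    field_simp
  have e4 : ‖q‖ ^ (2 - b/2) * (x^2+y^2)^(b/2)
      ≤ 2 ^ b * (‖q‖ ^ (2 + b/2) * ((‖q‖-z)/(2*‖q‖)) ^ (b/2)) := by
    rw [h5]
    have hq2 : (0:ℝ) ≤ ‖q‖ ^ ((2:ℝ) + b/2) := (Real.rpow_pos_of_pos hr0 _).le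
    gcongr
  -- splitting the powers
  have hax : 0 < |x| := abs_pos.2 hx
  have hay : 0 < |y| := abs_pos.2 hy
  have haz : 0 < |z| := abs_pos.2 hz
  have hsplit2 : ∀ t : ℝ, 0 < t → t ^ s = t ^ (b/2) * t ^ (2/3 - b/3) := by
    intro t ht
    rw [← Real.rpow_add ht]
    congr 1
    rw [hs_def]; ring
  have bound1 : |x| ^ (b/2) * |y| ^ (b/2) ≤ (x^2+y^2) ^ (b/2) := by
    rw [← Real.mul_rpow (abs_nonneg x) (abs_nonneg y)]
    apply Real.rpow_le_rpow (by positivity) _ (by positivity)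
    nlinarith [sq_nonneg (|x| - |y|), sq_abs x, sq_abs y]
  have bx : |x| ^ (2/3 - b/3 : ℝ) ≤ ‖q‖ ^ (2/3 - b/3 : ℝ) :=
    Real.rpow_le_rpow (abs_nonneg x) hxr (by linarith)
  have by' : |y| ^ (2/3 - b/3 : ℝ) ≤ ‖q‖ ^ (2/3 - b/3 : ℝ) :=
    Real.rpow_le_rpow (abs_nonneg y) hyr (by linarith)
  have bz : |z| ^ s ≤ ‖q‖ ^ s :=
    Real.rpow_le_rpow (abs_nonneg z) hzr' (by linarith)
  have hrprod : ‖q‖ ^ (2/3 - b/3 : ℝ) * ‖q‖ ^ (2/3 - b/3 : ℝ) * ‖q‖ ^ s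
      = ‖q‖ ^ (2 - b/2 : ℝ) := by
    rw [← Real.rpow_add hr0, ← Real.rpow_add hr0]
    congr 1
    rw [hs_def]; ring
  have e6 : |x| ^ s * |y| ^ s * |z| ^ s ≤ ‖q‖ ^ (2 - b/2) * (x^2+y^2)^(b/2) := by
    rw [hsplit2 |x| hax, hsplit2 |y| hay]
    calc |x| ^ (b/2) * |x| ^ (2/3 - b/3 : ℝ) * (|y| ^ (b/2) * |y| ^ (2/3 - b/3 : ℝ)) * |z| ^ s
        = (|x| ^ (b/2) * |y| ^ (b/2)) *
            (|x| ^ (2/3 - b/3 : ℝ) * |y| ^ (2/3 - b/3 : ℝ) * |z| ^ s) := by ring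
      _ ≤ (x^2+y^2) ^ (b/2) *
            (‖q‖ ^ (2/3 - b/3 : ℝ) * ‖q‖ ^ (2/3 - b/3 : ℝ) * ‖q‖ ^ s) := by
          apply mul_le_mul bound1 _ (by positivity) (by positivity)
          apply mul_le_mul (mul_le_mul bx by' (by positivity) (by positivity)) bz
            (by positivity) (by positivity)
      _ = ‖q‖ ^ (2 - b/2 : ℝ) * (x^2+y^2)^(b/2) := by rw [hrprod]; ring
  have hKI : |x| ^ s * |y| ^ s * |z| ^ s
      ≤ 2 ^ b * (‖q‖ ^ (2 + b/2) * ((‖q‖-z)/(2*‖q‖)) ^ (b/2)) := e6.trans e4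
  -- exponential bound
  have hExp : Real.exp (-‖q‖)
      ≤ Real.exp (-(|x|/3)) * Real.exp (-(|y|/3)) * Real.exp (-(|z|/3)) := by
    rw [← Real.exp_add, ← Real.exp_add, Real.exp_le_exp]
    linarith
  -- positivity facts
  have hP : 0 < |x| ^ s * |y| ^ s * |z| ^ s := by
    have := Real.rpow_pos_of_pos hax s
    have := Real.rpow_pos_of_pos hay s
    have := Real.rpow_pos_of_pos haz s
    positivity
  have hD : 0 < ‖q‖ ^ (2 + b/2) * ((‖q‖-z)/(2*‖q‖)) ^ (b/2) := by
    have h1 : (0:ℝ) < (‖q‖-z)/(2*‖q‖) := by positivity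
    have := Real.rpow_pos_of_pos hr0 (2 + b/2)
    have := Real.rpow_pos_of_pos h1 (b/2)
    positivity
  -- conclusion
  rw [hsinb, Real.norm_eq_abs, abs_of_nonneg (by positivity)]
  calc Real.exp (-‖q‖) / (‖q‖ ^ (2 + b/2) * ((‖q‖-z)/(2*‖q‖)) ^ (b/2))
      ≤ (Real.exp (-(|x|/3)) * Real.exp (-(|y|/3)) * Real.exp (-(|z|/3))) /
          ((|x| ^ s * |y| ^ s * |z| ^ s) / 2 ^ b) := by
        apply div_le_div₀ (by positivity) hExp (by positivity)
        rw [div_le_iff₀ h2b]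
        calc |x| ^ s * |y| ^ s * |z| ^ s
            ≤ 2 ^ b * (‖q‖ ^ (2 + b/2) * ((‖q‖-z)/(2*‖q‖)) ^ (b/2)) := hKI
          _ = (‖q‖ ^ (2 + b/2) * ((‖q‖-z)/(2*‖q‖)) ^ (b/2)) * 2 ^ b := by ring
    _ = 2 ^ b * ∏ i, (|q i| ^ (-s) * Real.exp (-(|q i| / 3))) := by
        rw [Fin.prod_univ_three]
        rw [Real.rpow_neg (abs_nonneg (q 0)), Real.rpow_neg (abs_nonneg (q 1)),
          Real.rpow_neg (abs_nonneg (q 2))]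
        rw [← hx_def, ← hy_def, ← hz_def]
        have h1 : |x| ^ s ≠ 0 := (Real.rpow_pos_of_pos hax s).ne'
        have h2 : |y| ^ s ≠ 0 := (Real.rpow_pos_of_pos hay s).ne'
        have h3 : |z| ^ s ≠ 0 := (Real.rpow_pos_of_pos haz s).ne'
        field_simp

/-- For `0 < b < 1` and a fixed unit vector `u ∈ ℝ³`, the integral over `ℝ³` of
`e^{-|q|}/(|q|^{2+b/2} sin^b(φ(q)/2))` is finite, where `φ(q)` is the angle between
`u` and `q`. -/
theorem stmt12 (b : ℝ) (hb : 0 < b) (hb1 : b < 1)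
    (u : EuclideanSpace ℝ (Fin 3)) (hu : ‖u‖ = 1) :
    Integrable (fun q : EuclideanSpace ℝ (Fin 3) =>
      Real.exp (-‖q‖) /
        (‖q‖ ^ (2 + b / 2) * Real.sin (InnerProductGeometry.angle u q / 2) ^ b)) := by
  have hcard : Module.finrank ℝ (EuclideanSpace ℝ (Fin 3)) = Fintype.card (Fin 3) := by simp
  have horth : Orthonormal ℝ (({2} : Set (Fin 3)).restrict (fun _ : Fin 3 => u)) := by
    refine ⟨fun i => hu, fun i j hij => absurd ?_ hij⟩
    have hi := i.2
    have hj := j.2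
    simp only [Set.mem_singleton_iff] at hi hj
    exact Subtype.ext (hi.trans hj.symm)
  obtain ⟨v, hv⟩ := horth.exists_orthonormalBasis_extension_of_card_eq hcard
  have hv2 : v 2 = u := hv 2 rfl
  have mp : MeasurePreserving (v.repr.symm) volume volume :=
    v.repr.symm.measurePreserving
  have emb : MeasurableEmbedding (v.repr.symm) :=
    v.repr.symm.toHomeomorph.measurableEmbedding
  rw [← mp.integrable_comp_emb emb]
  have heq : ((fun q : EuclideanSpace ℝ (Fin 3) =>
      Real.exp (-‖q‖) /
        (‖q‖ ^ (2 + b / 2) * Real.sin (InnerProductGeometry.angle u q / 2) ^ b)) ∘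
        v.repr.symm)
      = fun w : EuclideanSpace ℝ (Fin 3) =>
        Real.exp (-‖w‖) /
          (‖w‖ ^ (2 + b / 2) *
            Real.sin (angle (EuclideanSpace.single 2 (1:ℝ)) w / 2) ^ b) := by
    funext w
    have hang : InnerProductGeometry.angle u (v.repr.symm w)
        = angle (EuclideanSpace.single 2 (1:ℝ)) w := by
      conv_lhs => rw [← hv2, ← v.repr_symm_single 2]
      exact v.repr.symm.toLinearIsometry.angle_map _ _
    simp only [Function.comp_apply, LinearIsometryEquiv.norm_map, hang]
  rw [heq]
  exact key_int b hb hb1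
end

section
/- Let 0 < b < 1 and suppose f : R^3 → [0, ∞) is measurable with ‖f‖_{L^∞_w} := sup_p |p| e^{|p|} f(p) < ∞. Then for any fixed nonzero p ∈ R^3, ∫_{R^3} f(q) / (|q|^{1 + b/2} · sin^b(φ/2)) dq ≤ C ‖f‖_{L^∞_w}, where φ is the angle between p and q, and C depends only on b. -/
open MeasureTheory Real Set InnerProductGeometry

theorem myF_integrable {g : ℝ} (h0 : 0 < g) (h1 : g < 1) :
    Integrable (fun t : ℝ => Real.exp (-|t|/3) * |t| ^ (-g)) := by
  set F : ℝ → ℝ := fun t => Real.exp (-|t|/3) * |t| ^ (-g) with hFdef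
  have hFmeas : Measurable F := ((measurable_abs.neg.div_const 3).exp).mul
    (measurable_abs.pow_const _)
  have h01 : IntegrableOn F (Ioc (0:ℝ) 1) := by
    have base : IntegrableOn (fun t : ℝ => t ^ (-g)) (Ioc (0:ℝ) 1) := by
      have := intervalIntegral.intervalIntegrable_rpow' (a := 0) (b := 1)
        (r := -g) (by linarith)
      rwa [intervalIntegrable_iff_integrableOn_Ioc_of_le zero_le_one] at this
    refine base.integrable.mono' hFmeas.aestronglyMeasurable.restrict ?_
    filter_upwards [ae_restrict_mem measurableSet_Ioc] with t ht
    have ht0 : 0 < t := ht.1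
    have hFt : F t = Real.exp (-t/3) * t ^ (-g) := by
      simp only [hFdef]; rw [abs_of_pos ht0]
    rw [Real.norm_eq_abs, abs_of_nonneg (by simp only [hFdef]; positivity), hFt]
    calc Real.exp (-t/3) * t ^ (-g) ≤ 1 * t ^ (-g) :=
          mul_le_mul_of_nonneg_right (Real.exp_le_one_iff.mpr (by linarith))
            (Real.rpow_nonneg ht0.le _)
      _ = t ^ (-g) := one_mul _
  have h1i : IntegrableOn F (Ioi (1:ℝ)) := by
    have base : IntegrableOn (fun t : ℝ => Real.exp (-(1/3) * t)) (Ioi (1:ℝ)) :=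
      exp_neg_integrableOn_Ioi 1 (by norm_num)
    refine base.integrable.mono' hFmeas.aestronglyMeasurable.restrict ?_
    filter_upwards [ae_restrict_mem measurableSet_Ioi] with t ht
    have ht0 : (1:ℝ) < t := ht
    have h1t : |t| = t := abs_of_pos (by linarith)
    rw [Real.norm_eq_abs, abs_of_nonneg (by simp only [hFdef]; positivity)]
    simp only [hFdef, h1t]
    calc Real.exp (-t/3) * t ^ (-g) ≤ Real.exp (-t/3) * 1 :=
          mul_le_mul_of_nonneg_left
            (Real.rpow_le_one_of_one_le_of_nonpos (by linarith) (by linarith))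
            (Real.exp_pos _).le
      _ = Real.exp (-(1/3) * t) := by rw [mul_one]; ring_nf
  have hIoi : IntegrableOn F (Ioi (0:ℝ)) := by
    have := h01.union h1i
    rwa [Ioc_union_Ioi_eq_Ioi zero_le_one] at this
  have hIio : IntegrableOn F (Iio (0:ℝ)) := by
    have hmp : MeasurePreserving (fun t : ℝ => -t) volume volume :=
      Measure.measurePreserving_neg volume
    have hres : volume.restrict (Iio (0:ℝ)) =
        Measure.map (fun t : ℝ => -t) (volume.restrict (Ioi (0:ℝ))) := by
      rw [← hmp.map_eq, Measure.restrict_map measurable_neg measurableSet_Iio]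
      congr 1
      ext t
      simp [neg_lt_zero]
    rw [IntegrableOn, hres]
    rw [integrable_map_measure hFmeas.aestronglyMeasurable measurable_neg.aemeasurable]
    have : (F ∘ fun t : ℝ => -t) = F := by
      ext t; simp only [hFdef, Function.comp_apply, abs_neg]
    rwa [this]
  have hcompl : IntegrableOn F ({(0:ℝ)}ᶜ) := by
    rw [← Iio_union_Ioi]
    exact hIio.union hIoi
  rwa [IntegrableOn, MeasureTheory.restrict_compl_singleton] at hcompl

set_option maxHeartbeats 2000000 in
/-- For `0 < b < 1` there is a constant `C > 0` depending only on `b` such that: for any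
measurable `f : ℝ³ → [0,∞)` with weighted sup bound `|q| e^{|q|} f(q) ≤ M` and any
nonzero `p ∈ ℝ³`, `∫ f(q)/(|q|^{1+b/2} sin^b(φ/2)) dq ≤ C M`, where `φ` is the angle
between `p` and `q`. -/
theorem stmt15 (b : ℝ) (hb : 0 < b) (hb1 : b < 1) :
    ∃ C > 0, ∀ (f : EuclideanSpace ℝ (Fin 3) → ℝ) (M : ℝ),
      Measurable f → (∀ q, 0 ≤ f q) →
      (∀ q, ‖q‖ * Real.exp ‖q‖ * f q ≤ M) →
      ∀ p : EuclideanSpace ℝ (Fin 3), p ≠ 0 →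
        (∫ q : EuclideanSpace ℝ (Fin 3),
            f q / (‖q‖ ^ (1 + b / 2) *
              Real.sin (InnerProductGeometry.angle p q / 2) ^ b))
          ≤ C * M := by
  classical
  obtain ⟨γ, hγdef⟩ : ∃ γ : ℝ, γ = 2/3 + b/6 := ⟨_, rfl⟩
  have hγ0 : 0 < γ := by rw [hγdef]; linarith
  have hγ1 : γ < 1 := by rw [hγdef]; linarith
  set F : ℝ → ℝ := fun t => Real.exp (-|t|/3) * |t| ^ (-γ) with hFdef
  have hF : Integrable F := myF_integrable hγ0 hγ1
  have hFnn : ∀ t, 0 ≤ F t := fun t => by simp only [hFdef]; positivity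
  set I : ℝ := ∫ t, F t with hIdef
  have hI0 : 0 ≤ I := integral_nonneg hFnn
  set Ψ : (Fin 3 → ℝ) → ℝ := fun x => 2 ^ b * ∏ i, F (x i) with hΨdef
  have hΨint : Integrable Ψ := (Integrable.fintype_prod (fun _ : Fin 3 => hF)).const_mul _
  have hΨval : ∫ x, Ψ x = 2 ^ b * I ^ 3 := by
    rw [hΨdef, integral_const_mul, volume_pi, integral_fintype_prod_eq_pow (ι := Fin 3) F]
    norm_num
    exact Or.inl rfl
  refine ⟨2 ^ b * I ^ 3 + 1, by positivity, ?_⟩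
  intro f M hfm hf0 hfb p hp
  have hM : 0 ≤ M := by have := hfb 0; simpa using this
  -- construct the isometry sending u := p/‖p‖ to the first basis vector
  set u : EuclideanSpace ℝ (Fin 3) := ‖p‖⁻¹ • p with hudef
  have hu : ‖u‖ = 1 := norm_smul_inv_norm hp
  set v : EuclideanSpace ℝ (Fin 3) := EuclideanSpace.single 0 1 with hvdef
  have hv : ‖v‖ = 1 := by simp [hvdef, EuclideanSpace.norm_single]
  set e := Submodule.reflection (ℝ ∙ (u - v))ᗮ with hedef
  have heu : e u = v := Submodule.reflection_sub (by rw [hu, hv])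
  set m : EuclideanSpace ℝ (Fin 3) ≃ᵐ (Fin 3 → ℝ) :=
    (e.toHomeomorph.toMeasurableEquiv).trans (MeasurableEquiv.toLp 2 (Fin 3 → ℝ)).symm with hmdef
  have hm : MeasurePreserving m volume volume :=
    (EuclideanSpace.volume_preserving_symm_measurableEquiv_toLp (Fin 3)).comp e.measurePreserving
  have hmq : ∀ (q : EuclideanSpace ℝ (Fin 3)) (i : Fin 3), m q i = e q i := fun q i => rfl
  -- the null set where some coordinate vanishes
  set S : Fin 3 → Submodule ℝ (EuclideanSpace ℝ (Fin 3)) := fun i =>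
    LinearMap.ker ((LinearMap.proj i : ((Fin 3) → ℝ) →ₗ[ℝ] ℝ).comp
      ((WithLp.linearEquiv 2 ℝ (Fin 3 → ℝ)).toLinearMap.comp e.toLinearEquiv.toLinearMap)) with hSdef
  have hSmem : ∀ (i : Fin 3) (q : EuclideanSpace ℝ (Fin 3)), q ∈ S i ↔ e q i = 0 := by
    intro i q
    simp only [hSdef, LinearMap.mem_ker, LinearMap.comp_apply, LinearMap.proj_apply]
    exact Iff.rfl
  have hStop : ∀ i, S i ≠ ⊤ := by
    intro i h
    have h2 : e.symm (EuclideanSpace.single i 1) ∈ S i := h ▸ Submodule.mem_top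
    rw [hSmem] at h2
    rw [e.apply_symm_apply] at h2
    simp [EuclideanSpace.single_apply] at h2
  have hnull : volume (⋃ i, (S i : Set (EuclideanSpace ℝ (Fin 3)))) = 0 :=
    measure_iUnion_null fun i => Measure.addHaar_submodule _ _ (hStop i)
  have haegood : ∀ᵐ q : EuclideanSpace ℝ (Fin 3), ∀ i, e q i ≠ 0 := by
    rw [ae_iff]
    refine measure_mono_null ?_ hnull
    intro q hq
    simp only [mem_setOf_eq, not_forall, not_not] at hq
    obtain ⟨i, hi⟩ := hq
    exact mem_iUnion.mpr ⟨i, (hSmem i q).mpr hi⟩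
  -- integrability of the comparison function
  have hGint : Integrable (fun q : EuclideanSpace ℝ (Fin 3) => M * Ψ (m q)) :=
    ((hm.integrable_comp_emb m.measurableEmbedding).mpr hΨint).const_mul M
  have hnn : (0 : EuclideanSpace ℝ (Fin 3) → ℝ) ≤ᵐ[volume] fun q =>
      f q / (‖q‖ ^ (1 + b / 2) * Real.sin (angle p q / 2) ^ b) := by
    refine Filter.Eventually.of_forall fun q => ?_
    have hsnn : 0 ≤ Real.sin (angle p q / 2) :=
      Real.sin_nonneg_of_nonneg_of_le_pi (by linarith [angle_nonneg p q])
        (by linarith [angle_le_pi p q, Real.pi_pos])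
    exact div_nonneg (hf0 q) (mul_nonneg (Real.rpow_nonneg (norm_nonneg q) _)
      (Real.rpow_nonneg hsnn _))
  -- the pointwise bound
  have hle : (fun q : EuclideanSpace ℝ (Fin 3) =>
      f q / (‖q‖ ^ (1 + b / 2) * Real.sin (angle p q / 2) ^ b)) ≤ᵐ[volume]
      fun q => M * Ψ (m q) := by
    filter_upwards [haegood] with q hq
    -- make coordinates opaque
    have hΨm : Ψ (m q) = 2 ^ b * (F (e q 0) * F (e q 1) * F (e q 2)) := by
      simp only [hΨdef, Fin.prod_univ_three, hmq]
    have hnq : ‖e q‖ = ‖q‖ := e.norm_map q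
    have hinner0 : (inner ℝ u q : ℝ) = e q 0 := by
      have h1 : (inner ℝ u q : ℝ) = inner ℝ (e u) (e q) := (e.inner_map_map u q).symm
      rw [heu] at h1
      rw [h1, hvdef]
      simp [EuclideanSpace.inner_single_left]
    have hpn : ‖p‖ ≠ 0 := fun h => hp (norm_eq_zero.mp h)
    have hq0' : q ≠ 0 := by
      intro h
      exact hq 0 (by rw [h, map_zero]; rfl)
    have hqn' : ‖q‖ ≠ 0 := fun h => hq0' (norm_eq_zero.mp h)
    have hcos0 : Real.cos (angle p q) = e q 0 / ‖q‖ := by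
      rw [cos_angle]
      have h2 : (inner ℝ u q : ℝ) = ‖p‖⁻¹ * inner ℝ p q := real_inner_smul_left p q ‖p‖⁻¹
      rw [hinner0] at h2
      rw [h2]
      field_simp
      try ring
    obtain ⟨x, hx⟩ : ∃ x : Fin 3 → ℝ, x = fun i => e q i := ⟨_, rfl⟩
    have hqx : ∀ i, x i ≠ 0 := fun i => by rw [hx]; exact hq i
    have hnormx : Real.sqrt ((x 0)^2 + (x 1)^2 + (x 2)^2) = ‖q‖ := by
      rw [hx]
      simp only []
      rw [← hnq, EuclideanSpace.norm_eq, Fin.sum_univ_three]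
      simp [Real.norm_eq_abs, sq_abs]
    have hcosx : Real.cos (angle p q) = x 0 / ‖q‖ := by rw [hx]; exact hcos0
    have hΨx : Ψ (m q) = 2 ^ b * (F (x 0) * F (x 1) * F (x 2)) := by rw [hx]; exact hΨm
    clear hx hΨm hinner0 hnq hq
    clear hSmem hStop hnull hSdef hedef hmdef hudef hvdef hu hv heu hmq hGint hnn
    clear_value e u v m S
    -- notation and basic facts
    set n : ℝ := ‖q‖ with hndef
    set s : ℝ := Real.sin (angle p q / 2) with hsdef
    set r : ℝ := Real.sqrt ((x 1)^2 + (x 2)^2) with hrdef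
    have hsq0 : (0:ℝ) < (x 0)^2 :=
      lt_of_le_of_ne (sq_nonneg _) (Ne.symm (pow_ne_zero 2 (hqx 0)))
    have hsq1 : (0:ℝ) < (x 1)^2 :=
      lt_of_le_of_ne (sq_nonneg _) (Ne.symm (pow_ne_zero 2 (hqx 1)))
    have hsq2 : (0:ℝ) < (x 2)^2 :=
      lt_of_le_of_ne (sq_nonneg _) (Ne.symm (pow_ne_zero 2 (hqx 2)))
    have hr0 : 0 < r := Real.sqrt_pos.mpr (by positivity)
    have hn0 : 0 < n := by
      rw [← hnormx]
      exact Real.sqrt_pos.mpr (by positivity)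
    have hsum : (x 0)^2 + (x 1)^2 + (x 2)^2 = n^2 := by
      rw [← hnormx, Real.sq_sqrt (by positivity)]
    have hrsq : r^2 = (x 1)^2 + (x 2)^2 := Real.sq_sqrt (by positivity)
    have habs0 : |x 0| ≤ n := by
      calc |x 0| = Real.sqrt ((x 0)^2) := (Real.sqrt_sq_eq_abs _).symm
        _ ≤ Real.sqrt (n^2) := Real.sqrt_le_sqrt (by nlinarith)
        _ = n := Real.sqrt_sq hn0.le
    have habs1 : |x 1| ≤ r := by
      calc |x 1| = Real.sqrt ((x 1)^2) := (Real.sqrt_sq_eq_abs _).symm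
        _ ≤ r := Real.sqrt_le_sqrt (by nlinarith)
    have habs2 : |x 2| ≤ r := by
      calc |x 2| = Real.sqrt ((x 2)^2) := (Real.sqrt_sq_eq_abs _).symm
        _ ≤ r := Real.sqrt_le_sqrt (by nlinarith)
    have hrn : r ≤ n := by
      rw [hrdef]
      calc Real.sqrt ((x 1)^2 + (x 2)^2) ≤ Real.sqrt (n^2) :=
            Real.sqrt_le_sqrt (by nlinarith)
        _ = n := Real.sqrt_sq hn0.le
    -- lower bound for sin of the half angle
    have hsnn : 0 ≤ s :=
      Real.sin_nonneg_of_nonneg_of_le_pi (by linarith [angle_nonneg p q])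
        (by linarith [angle_le_pi p q, Real.pi_pos])
    have hzn : |x 0| ≤ n := habs0
    have hkey : r^2 ≤ (n - x 0) * (2 * n) := by
      nlinarith [sq_nonneg (n - x 0), abs_le.mp hzn]
    have hsin : r / (2 * n) ≤ s := by
      have hsq : (r / (2*n))^2 ≤ s^2 := by
        have hhalf : s^2 = 1/2 - Real.cos (angle p q)/2 := by
          rw [hsdef, Real.sin_sq_eq_half_sub]
          rw [show 2 * (angle p q / 2) = angle p q by ring]
        rw [hhalf, hcosx]
        rw [div_pow, div_le_iff₀ (by positivity)]
        have hzz : x 0 / n * n ^ 2 = x 0 * n := by field_simp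
        nlinarith [hkey, hzz]
      have := Real.sqrt_le_sqrt hsq
      rwa [Real.sqrt_sq (by positivity), Real.sqrt_sq hsnn] at this
    have hs0 : 0 < s := lt_of_lt_of_le (by positivity) hsin
    -- the upper bound on f
    have hfq : f q ≤ M * Real.exp (-n) / n := by
      have h := hfb q
      rw [← hndef] at h
      have h3 : (0:ℝ) < n * Real.exp n := by positivity
      have h2 : f q * (n * Real.exp n) ≤ M := by nlinarith [h]
      calc f q = f q * (n * Real.exp n) / (n * Real.exp n) := by
            rw [mul_div_assoc, div_self h3.ne', mul_one]
        _ ≤ M / (n * Real.exp n) := by gcongr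
        _ = M * Real.exp (-n) / n := by
            rw [Real.exp_neg]
            field_simp
            try (left; ring)
    -- positivity of pieces
    have h2b : (0:ℝ) < 2 ^ b := Real.rpow_pos_of_pos (by norm_num) b
    have hnb : 0 < n ^ (1 + b/2) := Real.rpow_pos_of_pos hn0 _
    have hsb : 0 < s ^ b := Real.rpow_pos_of_pos hs0 b
    have hrb : 0 < r ^ b := Real.rpow_pos_of_pos hr0 b
    -- step 1 : bound the denominator from below
    have hstep1 : f q / (n ^ (1 + b/2) * s ^ b) ≤
        M * (Real.exp (-n) * (n ^ (1 + b/2 + 1) * (r/(2*n)) ^ b)⁻¹) := by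
      have hd1 : 0 < n ^ (1 + b/2) * s ^ b := by positivity
      have hrr : 0 < (r/(2*n)) ^ b := Real.rpow_pos_of_pos (by positivity) b
      calc f q / (n ^ (1 + b/2) * s ^ b)
          ≤ (M * Real.exp (-n) / n) / (n ^ (1 + b/2) * s ^ b) :=
            (div_le_div_iff_of_pos_right hd1).mpr hfq
        _ = M * (Real.exp (-n) * (n ^ (1 + b/2) * n * s ^ b)⁻¹) := by
            field_simp
            try ring
            try exact Or.inl trivial
        _ ≤ M * (Real.exp (-n) * (n ^ (1 + b/2) * n * (r/(2*n)) ^ b)⁻¹) := by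
            have hmono : (r/(2*n)) ^ b ≤ s ^ b :=
              Real.rpow_le_rpow (by positivity) hsin hb.le
            gcongr
        _ = M * (Real.exp (-n) * (n ^ (1 + b/2 + 1) * (r/(2*n)) ^ b)⁻¹) := by
            rw [Real.rpow_add hn0 _ 1, Real.rpow_one]
    -- step 2 : rewrite inverse denominator as a product of powers
    have hstep2 : (n ^ (1 + b/2 + 1) * (r/(2*n)) ^ b)⁻¹ =
        2 ^ b * (n ^ (b/2 - 2) * r ^ (-b)) := by
      rw [Real.div_rpow hr0.le (by positivity), Real.mul_rpow (by norm_num) hn0.le,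
        Real.rpow_neg hr0.le]
      rw [show (b/2 - 2 : ℝ) = b - (1 + b/2 + 1) by ring,
        Real.rpow_sub hn0]
      have h1 : n ^ (1 + b/2 + 1 : ℝ) ≠ 0 := (Real.rpow_pos_of_pos hn0 _).ne'
      have h2 : n ^ (b : ℝ) ≠ 0 := (Real.rpow_pos_of_pos hn0 _).ne'
      field_simp
      try ring
    -- step 3 : the product bound
    have hexp3 : Real.exp (-n) ≤
        Real.exp (-|x 0|/3) * Real.exp (-|x 1|/3) * Real.exp (-|x 2|/3) := by
      rw [← Real.exp_add, ← Real.exp_add]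
      apply Real.exp_le_exp.mpr
      have h0 := habs0
      have h1 := habs1.trans hrn
      have h2 := habs2.trans hrn
      linarith
    have hpow3 : n ^ (b/2 - 2) * r ^ (-b) ≤
        |x 0| ^ (-γ) * |x 1| ^ (-γ) * |x 2| ^ (-γ) := by
      have hax0 : 0 < |x 0| := abs_pos.mpr (hqx 0)
      have hax1 : 0 < |x 1| := abs_pos.mpr (hqx 1)
      have hax2 : 0 < |x 2| := abs_pos.mpr (hqx 2)
      have hcore : |x 0| ^ γ * |x 1| ^ γ * |x 2| ^ γ ≤ n ^ (2 - b/2) * r ^ b := by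
        have hgb : 0 ≤ γ - b/2 := by rw [hγdef]; linarith
        have c0 : |x 0| ^ γ ≤ n ^ γ := Real.rpow_le_rpow (abs_nonneg _) habs0 hγ0.le
        have c1 : |x 1| ^ γ ≤ n ^ (γ - b/2) * r ^ (b/2) := by
          have h' : |x 1| ^ ((γ - b/2) + b/2) = |x 1| ^ (γ - b/2) * |x 1| ^ (b/2) :=
            Real.rpow_add hax1 _ _
          rw [show (γ - b/2) + b/2 = γ by ring] at h'
          rw [h']
          exact mul_le_mul (Real.rpow_le_rpow (abs_nonneg _) (habs1.trans hrn) hgb)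
            (Real.rpow_le_rpow (abs_nonneg _) habs1 (by linarith))
            (Real.rpow_nonneg (abs_nonneg _) _) (Real.rpow_nonneg hn0.le _)
        have c2 : |x 2| ^ γ ≤ n ^ (γ - b/2) * r ^ (b/2) := by
          have h' : |x 2| ^ ((γ - b/2) + b/2) = |x 2| ^ (γ - b/2) * |x 2| ^ (b/2) :=
            Real.rpow_add hax2 _ _
          rw [show (γ - b/2) + b/2 = γ by ring] at h'
          rw [h']
          exact mul_le_mul (Real.rpow_le_rpow (abs_nonneg _) (habs2.trans hrn) hgb)
            (Real.rpow_le_rpow (abs_nonneg _) habs2 (by linarith))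
            (Real.rpow_nonneg (abs_nonneg _) _) (Real.rpow_nonneg hn0.le _)
        calc |x 0| ^ γ * |x 1| ^ γ * |x 2| ^ γ
            ≤ n ^ γ * (n ^ (γ - b/2) * r ^ (b/2)) * (n ^ (γ - b/2) * r ^ (b/2)) := by
              have p0 : (0:ℝ) ≤ |x 0| ^ γ := Real.rpow_nonneg (abs_nonneg _) _
              have p1 : (0:ℝ) ≤ |x 1| ^ γ := Real.rpow_nonneg (abs_nonneg _) _
              have p2 : (0:ℝ) ≤ |x 2| ^ γ := Real.rpow_nonneg (abs_nonneg _) _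
              have q0 : (0:ℝ) ≤ n ^ γ := Real.rpow_nonneg hn0.le _
              have q1 : (0:ℝ) ≤ n ^ (γ - b/2) * r ^ (b/2) := by positivity
              exact mul_le_mul (mul_le_mul c0 c1 p1 q0) c2 p2 (by positivity)
          _ = n ^ (γ + (γ - b/2) + (γ - b/2)) * r ^ (b/2 + b/2) := by
              rw [Real.rpow_add hn0, Real.rpow_add hn0, Real.rpow_add hr0]
              ring
          _ = n ^ (2 - b/2) * r ^ b := by
              rw [show γ + (γ - b/2) + (γ - b/2) = 2 - b/2 by rw [hγdef]; ring,
                show b/2 + b/2 = b by ring]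
      -- invert
      have hpos : (0:ℝ) < |x 0| ^ γ * |x 1| ^ γ * |x 2| ^ γ := by positivity
      have hinv := one_div_le_one_div_of_le hpos hcore
      rw [show n ^ (b/2 - 2 : ℝ) = (n ^ (2 - b/2 : ℝ))⁻¹ by
          rw [← Real.rpow_neg hn0.le]; ring_nf,
        Real.rpow_neg hr0.le,
        show |x 0| ^ (-γ) = (|x 0| ^ γ)⁻¹ from Real.rpow_neg (abs_nonneg _) γ,
        show |x 1| ^ (-γ) = (|x 1| ^ γ)⁻¹ from Real.rpow_neg (abs_nonneg _) γ,
        show |x 2| ^ (-γ) = (|x 2| ^ γ)⁻¹ from Real.rpow_neg (abs_nonneg _) γ]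
      rw [one_div, one_div] at hinv
      calc (n ^ (2 - b/2 : ℝ))⁻¹ * (r ^ b)⁻¹ = (n ^ (2 - b/2 : ℝ) * r ^ b)⁻¹ := by
            rw [mul_inv]
        _ ≤ (|x 0| ^ γ * |x 1| ^ γ * |x 2| ^ γ)⁻¹ := hinv
        _ = (|x 0| ^ γ)⁻¹ * (|x 1| ^ γ)⁻¹ * (|x 2| ^ γ)⁻¹ := by
            rw [mul_inv, mul_inv]
    -- combine
    have hFx : F (x 0) * F (x 1) * F (x 2) =
        (Real.exp (-|x 0|/3) * Real.exp (-|x 1|/3) * Real.exp (-|x 2|/3)) *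
        (|x 0| ^ (-γ) * |x 1| ^ (-γ) * |x 2| ^ (-γ)) := by
      simp only [hFdef]
      ring
    calc f q / (n ^ (1 + b/2) * s ^ b)
        ≤ M * (Real.exp (-n) * (n ^ (1 + b/2 + 1) * (r/(2*n)) ^ b)⁻¹) := hstep1
      _ = M * (2 ^ b * (Real.exp (-n) * (n ^ (b/2 - 2) * r ^ (-b)))) := by
          rw [hstep2]; ring
      _ ≤ M * (2 ^ b * ((Real.exp (-|x 0|/3) * Real.exp (-|x 1|/3) * Real.exp (-|x 2|/3)) *
            (|x 0| ^ (-γ) * |x 1| ^ (-γ) * |x 2| ^ (-γ)))) := by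
          apply mul_le_mul_of_nonneg_left _ hM
          apply mul_le_mul_of_nonneg_left _ h2b.le
          apply mul_le_mul hexp3 hpow3 (by positivity) (by positivity)
      _ = M * Ψ (m q) := by rw [hΨx, hFx]
  calc (∫ q : EuclideanSpace ℝ (Fin 3),
          f q / (‖q‖ ^ (1 + b / 2) * Real.sin (angle p q / 2) ^ b))
      ≤ ∫ q : EuclideanSpace ℝ (Fin 3), M * Ψ (m q) :=
        integral_mono_of_nonneg hnn hGint hle
    _ = M * ∫ x, Ψ x := by
        rw [integral_const_mul, hm.integral_comp']
    _ = M * (2 ^ b * I ^ 3) := by rw [hΨval]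
    _ ≤ (2 ^ b * I ^ 3 + 1) * M := by nlinarith [Real.rpow_nonneg (by norm_num : (0:ℝ) ≤ 2) b, pow_nonneg hI0 3]
end

section
/- Let p, q ∈ R^3 and ω ∈ S², with ρ := sqrt(2(|p||q| − p·q)) > 0, ν := |p| + |q|, n := p + q. Define p' := n/2 + (ρ/2)(ω + ((n·ω) n)/(ρ(ν + ρ))) and q' := n/2 − (ρ/2)(ω + ((n·ω) n)/(ρ(ν + ρ))). Then p' + q' = p + q and |p'| = ν/2 + (n·ω)/2, |q'| = ν/2 − (n·ω)/2. -/
set_option maxHeartbeats 1000000 in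
/-- The massless post-collision momentum parametrization conserves the total momentum, and
the norms of the post-collision momenta are `ν/2 ± (n·ω)/2`, where `ν = |p|+|q|`,
`n = p+q`, `ρ = √(2(|p||q| - p·q))`. -/
theorem stmt17 (p q ω : EuclideanSpace ℝ (Fin 3)) (hω : ‖ω‖ = 1)
    (ρ ν : ℝ) (n : EuclideanSpace ℝ (Fin 3))
    (hρdef : ρ = Real.sqrt (2 * (‖p‖ * ‖q‖ - (inner ℝ p q : ℝ)))) (hρ : 0 < ρ)
    (hν : ν = ‖p‖ + ‖q‖) (hn : n = p + q)
    (p' q' : EuclideanSpace ℝ (Fin 3))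
    (hp' : p' = (1 / 2 : ℝ) • n +
      (ρ / 2) • (ω + (((inner ℝ n ω : ℝ)) / (ρ * (ν + ρ))) • n))
    (hq' : q' = (1 / 2 : ℝ) • n -
      (ρ / 2) • (ω + (((inner ℝ n ω : ℝ)) / (ρ * (ν + ρ))) • n)) :
    p' + q' = p + q ∧
    ‖p'‖ = ν / 2 + (inner ℝ n ω : ℝ) / 2 ∧
    ‖q'‖ = ν / 2 - (inner ℝ n ω : ℝ) / 2 := by
  set a : ℝ := (inner ℝ n ω : ℝ) with ha
  -- ρ² = 2(‖p‖‖q‖ - ⟪p,q⟫)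
  have harg : (0:ℝ) ≤ 2 * (‖p‖ * ‖q‖ - (inner ℝ p q : ℝ)) := by
    by_contra h
    push_neg at h
    rw [hρdef, Real.sqrt_eq_zero_of_nonpos h.le] at hρ
    exact lt_irrefl _ hρ
  have hρsq : ρ ^ 2 = 2 * (‖p‖ * ‖q‖ - (inner ℝ p q : ℝ)) := by
    rw [hρdef, Real.sq_sqrt harg]
  have hνnn : 0 ≤ ν := by rw [hν]; positivity
  have hνρ : 0 < ν + ρ := by linarith
  have hνρ' : ν + ρ ≠ 0 := ne_of_gt hνρ
  have hρ' : ρ ≠ 0 := ne_of_gt hρ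
  have hnn : (inner ℝ n n : ℝ) = ν ^ 2 - ρ ^ 2 := by
    rw [hn, hν]
    rw [inner_add_add_self]
    rw [real_inner_self_eq_norm_sq, real_inner_self_eq_norm_sq]
    have hpq : (inner ℝ q p : ℝ) = inner ℝ p q := real_inner_comm p q
    nlinarith [hρsq, hpq]
  have hωω : (inner ℝ ω ω : ℝ) = 1 := by
    rw [real_inner_self_eq_norm_sq, hω]; norm_num
  have hωn : (inner ℝ ω n : ℝ) = a := real_inner_comm n ω
  -- bound: |a| ≤ ν
  have hna : |a| ≤ ν := by
    have h1 : |a| ≤ ‖n‖ * ‖ω‖ := abs_real_inner_le_norm n ω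
    rw [hω, mul_one] at h1
    have h2 : ‖n‖ ^ 2 = ν ^ 2 - ρ ^ 2 := by rw [← real_inner_self_eq_norm_sq, hnn]
    have h3 : ‖n‖ ≤ ν := by nlinarith [norm_nonneg n, sq_nonneg ρ]
    linarith
  have hc1 : 0 ≤ ν / 2 + a / 2 := by
    have := abs_le.mp hna
    linarith [this.1]
  have hc2 : 0 ≤ ν / 2 - a / 2 := by
    have := abs_le.mp hna
    linarith [this.2]
  have hp'sq : (inner ℝ p' p' : ℝ) = (ν / 2 + a / 2) ^ 2 := by
    rw [hp']
    simp only [inner_add_left, inner_add_right, inner_smul_left, inner_smul_right,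
      inner_sub_left, inner_sub_right, RCLike.conj_to_real, hnn, hωω, hωn, ← ha]
    field_simp
    ring
  have hq'sq : (inner ℝ q' q' : ℝ) = (ν / 2 - a / 2) ^ 2 := by
    rw [hq']
    simp only [inner_add_left, inner_add_right, inner_smul_left, inner_smul_right,
      inner_sub_left, inner_sub_right, RCLike.conj_to_real, hnn, hωω, hωn, ← ha]
    field_simp
    ring
  refine ⟨?_, ?_, ?_⟩
  · calc p' + q' = (1 / 2 : ℝ) • n + (1 / 2 : ℝ) • n := by rw [hp', hq']; abel
      _ = p + q := by rw [← add_smul, hn]; norm_num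
  · have : ‖p'‖ ^ 2 = (ν / 2 + a / 2) ^ 2 := by
      rw [← real_inner_self_eq_norm_sq, hp'sq]
    calc ‖p'‖ = Real.sqrt (‖p'‖ ^ 2) := (Real.sqrt_sq (norm_nonneg _)).symm
      _ = Real.sqrt ((ν / 2 + a / 2) ^ 2) := by rw [this]
      _ = ν / 2 + a / 2 := Real.sqrt_sq hc1
  · have : ‖q'‖ ^ 2 = (ν / 2 - a / 2) ^ 2 := by
      rw [← real_inner_self_eq_norm_sq, hq'sq]
    calc ‖q'‖ = Real.sqrt (‖q'‖ ^ 2) := (Real.sqrt_sq (norm_nonneg _)).symm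
      _ = Real.sqrt ((ν / 2 - a / 2) ^ 2) := by rw [this]
      _ = ν / 2 - a / 2 := Real.sqrt_sq hc2
end
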